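/- arXiv:2510.20786 — 8 statements merged into one kernel-verified Lean document; each statement's English description precedes it below -/
import Mathlib

section
/- Let δ > 0, L₁ ≥ δ, and φ(λ) = (32δ + |λ|) · ⌈log₂(L₁/δ)⌉ / ⌈log₂(max{|λ|, 2δ}/δ)⌉. Then the map λ ↦ λ / φ(λ) is monotonically increasing on the interval [−L₁, L₁]. -/
lemma stmt1_aux (δ p q bp bq : ℝ) (hδ : 0 < δ) (hp : 0 ≤ p) (hpq : p ≤ q)
    (hbp : 0 ≤ bp) (hble : bp ≤ bq) :
    p * bp * (32 * δ + q) ≤ q * bq * (32 * δ + p) := by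
  have hq : 0 ≤ q := le_trans hp hpq
  have h1 : 0 ≤ δ * (q * bq - p * bp) :=
    mul_nonneg hδ.le (sub_nonneg.2 (mul_le_mul hpq hble hbp hq))
  have h2 : 0 ≤ p * q * (bq - bp) :=
    mul_nonneg (mul_nonneg hp hq) (sub_nonneg.2 hble)
  nlinarith [h1, h2]

/-- `λ ↦ λ / φ(λ)` is monotone increasing on `[-L₁, L₁]`, where
`φ(λ) = (32δ + |λ|) · ⌈log₂(L₁/δ)⌉ / ⌈log₂(max{|λ|, 2δ}/δ)⌉`. -/
theorem stmt1 (δ L₁ : ℝ) (hδ : 0 < δ) (hL : δ ≤ L₁) :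
    MonotoneOn (fun lam : ℝ =>
      lam / ((32 * δ + |lam|) * (⌈Real.logb 2 (L₁ / δ)⌉ : ℝ) /
        (⌈Real.logb 2 (max |lam| (2 * δ) / δ)⌉ : ℝ)))
      (Set.Icc (-L₁) L₁) := by
  intro x hx y hy hxy
  simp only
  set B : ℝ → ℝ := fun z => (⌈Real.logb 2 (max |z| (2 * δ) / δ)⌉ : ℝ) with hBdef
  have hBone : ∀ z : ℝ, (1:ℝ) ≤ B z := by
    intro z
    have h2 : (2:ℝ) ≤ max |z| (2*δ) / δ := by
      rw [le_div_iff₀ hδ]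
      exact le_max_right _ _
    have hlog : (1:ℝ) ≤ Real.logb 2 (max |z| (2*δ) / δ) := by
      have := Real.logb_le_logb_of_le (b := 2) (by norm_num) (by norm_num : (0:ℝ) < 2) h2
      rwa [Real.logb_self_eq_one (by norm_num)] at this
    exact le_trans hlog (Int.le_ceil _)
  have hBmono : ∀ a b : ℝ, |a| ≤ |b| → B a ≤ B b := by
    intro a b hab
    have hlog : Real.logb 2 (max |a| (2*δ) / δ) ≤ Real.logb 2 (max |b| (2*δ) / δ) := by
      apply Real.logb_le_logb_of_le (by norm_num)
      · positivity
      · gcongr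
    simp only [hBdef]
    exact_mod_cast Int.ceil_le_ceil hlog
  set C : ℝ := (⌈Real.logb 2 (L₁ / δ)⌉ : ℝ) with hCdef
  have hC0 : 0 ≤ C := by
    have : (0:ℝ) ≤ Real.logb 2 (L₁ / δ) := by
      apply Real.logb_nonneg (by norm_num)
      rw [le_div_iff₀ hδ]; linarith
    exact le_trans this (Int.le_ceil _)
  rw [div_div_eq_mul_div, div_div_eq_mul_div]
  rcases eq_or_lt_of_le hC0 with hC | hC
  · simp [← hC]
  have hCpos : (0:ℝ) < C := hC
  have hAx : (0:ℝ) < 32 * δ + |x| := by positivity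
  have hAy : (0:ℝ) < 32 * δ + |y| := by positivity
  rw [div_le_div_iff₀ (by positivity) (by positivity)]
  have key : x * B x * (32 * δ + |y|) ≤ y * B y * (32 * δ + |x|) := by
    rcases le_or_gt 0 x with hx0 | hx0
    · have hy0 : 0 ≤ y := le_trans hx0 hxy
      rw [abs_of_nonneg hx0, abs_of_nonneg hy0]
      have hBle : B x ≤ B y := hBmono _ _ (by rw [abs_of_nonneg hx0, abs_of_nonneg hy0]; exact hxy)
      exact stmt1_aux δ x y (B x) (B y) hδ hx0 hxy (by linarith [hBone x]) hBle
    rcases le_or_gt 0 y with hy0 | hy0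
    · have h1 : x * B x * (32 * δ + |y|) ≤ 0 :=
        mul_nonpos_of_nonpos_of_nonneg
          (mul_nonpos_of_nonpos_of_nonneg hx0.le (by linarith [hBone x])) hAy.le
      have h2 : 0 ≤ y * B y * (32 * δ + |x|) :=
        mul_nonneg (mul_nonneg hy0 (by linarith [hBone y])) hAx.le
      linarith
    · have hx0' : x ≤ 0 := hx0.le
      have hy0' : y ≤ 0 := hy0.le
      rw [abs_of_nonpos hx0', abs_of_nonpos hy0']
      have hBle : B y ≤ B x := hBmono _ _ (by rw [abs_of_nonpos hx0', abs_of_nonpos hy0']; linarith)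
      have := stmt1_aux δ (-y) (-x) (B y) (B x) hδ (by linarith) (by linarith)
        (by linarith [hBone y]) hBle
      nlinarith [this]
  nlinarith [key, hCpos, mul_le_mul_of_nonneg_right key hCpos.le]
end

section
/- Let δ > 0, L₁ ≥ δ, p_max = max{⌈log₂(L₁/δ)⌉, 16}, and φ(λ) = (32δ + |λ|) · ⌈log₂(L₁/δ)⌉ / ⌈log₂(max{|λ|, 2δ}/δ)⌉. For any positive integer p and any real λ with 2^p δ < |λ| ≤ 2^{p+1} δ, one has l_p < |λ|/φ(λ) ≤ r_p, where l_p = (1/p_max)·(p+1)/(1 + 2^{−(p−5)}) and r_p = (1/p_max)·(p+1)/(1 + 2^{−(p−4)}). -/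
/-- for `2^p δ < |λ| ≤ 2^{p+1} δ` one has `l_p < |λ|/φ(λ) ≤ r_p`, where
`l_p = (1/p_max)·(p+1)/(1 + 2^{-(p-5)})`, `r_p = (1/p_max)·(p+1)/(1 + 2^{-(p-4)})`,
`p_max = ⌈log₂(L₁/δ)⌉ (= max{⌈log₂(L₁/δ)⌉, 16})`. -/
theorem stmt2 (δ L₁ : ℝ) (hδ : 0 < δ) (hL : δ ≤ L₁)
    (pmax : ℕ) (hpmax : (pmax : ℤ) = ⌈Real.logb 2 (L₁ / δ)⌉) (hp16 : 16 ≤ pmax)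
    (p : ℕ) (hp : 1 ≤ p) (lam : ℝ)
    (hlow : 2 ^ p * δ < |lam|) (hhigh : |lam| ≤ 2 ^ (p + 1) * δ) :
    (1 / (pmax : ℝ)) * ((p : ℝ) + 1) / (1 + 2 ^ (-((p : ℝ) - 5)))
      < |lam| / ((32 * δ + |lam|) * (⌈Real.logb 2 (L₁ / δ)⌉ : ℝ) /
          (⌈Real.logb 2 (max |lam| (2 * δ) / δ)⌉ : ℝ)) ∧
    |lam| / ((32 * δ + |lam|) * (⌈Real.logb 2 (L₁ / δ)⌉ : ℝ) /
          (⌈Real.logb 2 (max |lam| (2 * δ) / δ)⌉ : ℝ))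
      ≤ (1 / (pmax : ℝ)) * ((p : ℝ) + 1) / (1 + 2 ^ (-((p : ℝ) - 4))) := by
  have hP : (0:ℝ) < 2 ^ p := by positivity
  have hx0 : (0:ℝ) < |lam| := lt_trans (by positivity) hlow
  have h2p : (2:ℝ) ≤ 2 ^ p := by
    calc (2:ℝ) = 2 ^ 1 := by norm_num
    _ ≤ 2 ^ p := pow_le_pow_right₀ (by norm_num) hp
  have hmax : max |lam| (2 * δ) = |lam| := max_eq_left (by nlinarith)
  have hb : (1:ℝ) < 2 := one_lt_two
  have hratio : 0 < |lam| / δ := by positivity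
  have hceil : ⌈Real.logb 2 (max |lam| (2 * δ) / δ)⌉ = (p : ℤ) + 1 := by
    rw [hmax, Int.ceil_eq_iff]
    constructor
    · push_cast
      have h1 : ((p:ℝ) + 1 - 1) = ((p:ℕ) : ℝ) := by push_cast; ring
      rw [h1, Real.lt_logb_iff_rpow_lt hb hratio, Real.rpow_natCast, lt_div_iff₀ hδ]
      linarith
    · push_cast
      rw [Real.logb_le_iff_le_rpow hb hratio]
      have h1 : ((p:ℝ) + 1) = (((p+1 : ℕ)) : ℝ) := by push_cast; ring
      rw [h1, Real.rpow_natCast, div_le_iff₀ hδ]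
      exact hhigh
  have hpm : ((⌈Real.logb 2 (L₁ / δ)⌉ : ℤ) : ℝ) = (pmax : ℝ) := by
    rw [← hpmax]; norm_num
  have e5 : (2:ℝ) ^ (-((p : ℝ) - 5)) = 32 / 2 ^ p := by
    rw [show -((p:ℝ) - 5) = (5:ℝ) - (p:ℝ) by ring, Real.rpow_sub two_pos,
      Real.rpow_natCast, show (5:ℝ) = ((5:ℕ):ℝ) by norm_num, Real.rpow_natCast]
    norm_num
  have e4 : (2:ℝ) ^ (-((p : ℝ) - 4)) = 16 / 2 ^ p := by
    rw [show -((p:ℝ) - 4) = (4:ℝ) - (p:ℝ) by ring, Real.rpow_sub two_pos,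
      Real.rpow_natCast, show (4:ℝ) = ((4:ℕ):ℝ) by norm_num, Real.rpow_natCast]
    norm_num
  rw [hceil, hpm, e5, e4]
  push_cast
  have hpm0 : (0:ℝ) < (pmax : ℝ) := by
    have : (0:ℕ) < pmax := by omega
    exact_mod_cast this
  have hp1 : (0:ℝ) < (p:ℝ) + 1 := by positivity
  have hden : (0:ℝ) < 32 * δ + |lam| := by positivity
  have hhigh' : |lam| ≤ 2 * (2 ^ p * δ) := by rw [pow_succ] at hhigh; linarith
  constructor
  · rw [div_lt_div_iff₀ (by positivity) (by positivity)]
    have expand : 1 / (pmax:ℝ) * ((p:ℝ)+1) * ((32*δ+ |lam|) * (pmax:ℝ) / ((p:ℝ)+1))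
        = 32*δ+ |lam| := by
      field_simp
    rw [expand]
    have key : 32*δ < |lam| * (32/2^p) := by
      have h2 : |lam| * (32/2^p) = |lam| * 32/2^p := by ring
      rw [h2, lt_div_iff₀ hP]
      nlinarith
    calc 32*δ+ |lam| < |lam| * (32/2^p) + |lam| := by linarith
      _ = |lam| * (1+32/2^p) := by ring
  · rw [div_le_div_iff₀ (by positivity) (by positivity)]
    have expand : 1 / (pmax:ℝ) * ((p:ℝ)+1) * ((32*δ+ |lam|) * (pmax:ℝ) / ((p:ℝ)+1))
        = 32*δ+ |lam| := by
      field_simp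
    rw [expand]
    have key : |lam| * (16/2^p) ≤ 32*δ := by
      have h2 : |lam| * (16/2^p) = |lam| * 16/2^p := by ring
      rw [h2, div_le_iff₀ hP]
      nlinarith
    calc |lam| * (1+16/2^p) = |lam| * (16/2^p) + |lam| := by ring
      _ ≤ 32*δ+ |lam| := by linarith
end

section
/- For any positive reals d, L₁, L₂, Δ, ε satisfying ε ≤ min{L₁²/L₂, Δ^{2/3} L₂^{1/3}, Δ L₂ / L₁}, it holds that min{ √(d L₂) · Δ · ε^{−3/2} + d , L₁^{1/2} L₂^{1/4} · Δ · ε^{−7/4} } ≤ √((1+√5)/2) · d^{1/4} L₁^{1/4} L₂^{3/8} · Δ · ε^{−13/8}. -/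
/-- comparison of the dimension-dependent rates of Doikov et al. / Li-Lin
with the rate of Jiang et al. -/
theorem stmt3 (d L₁ L₂ Δ ε : ℝ) (hd : 0 < d) (hL₁ : 0 < L₁) (hL₂ : 0 < L₂)
    (hΔ : 0 < Δ) (hε : 0 < ε)
    (hεle : ε ≤ min (L₁ ^ 2 / L₂) (min (Δ ^ ((2:ℝ)/3) * L₂ ^ ((1:ℝ)/3)) (Δ * L₂ / L₁))) :
    min (Real.sqrt (d * L₂) * Δ * ε ^ (-(3:ℝ)/2) + d)
        (L₁ ^ ((1:ℝ)/2) * L₂ ^ ((1:ℝ)/4) * Δ * ε ^ (-(7:ℝ)/4))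
      ≤ Real.sqrt ((1 + Real.sqrt 5) / 2) *
        (d ^ ((1:ℝ)/4) * L₁ ^ ((1:ℝ)/4) * L₂ ^ ((3:ℝ)/8) * Δ * ε ^ (-(13:ℝ)/8)) := by
  have h2 : ε ≤ Δ ^ ((2:ℝ)/3) * L₂ ^ ((1:ℝ)/3) :=
    hεle.trans ((min_le_right _ _).trans (min_le_left _ _))
  have h3 : ε ≤ Δ * L₂ / L₁ :=
    hεle.trans ((min_le_right _ _).trans (min_le_right _ _))
  have key : ∀ (y : ℝ), 0 < y → ∀ (a : ℝ) (n : ℕ), 8 * a = n → y ^ a = (y ^ ((1:ℝ)/8)) ^ n := by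
    intro y hy a n h
    rw [← Real.rpow_natCast (y ^ ((1:ℝ)/8)) n, ← Real.rpow_mul hy.le]
    congr 1
    · linarith
  set p := d ^ ((1:ℝ)/8) with hpdef
  set q := L₁ ^ ((1:ℝ)/8) with hqdef
  set r := L₂ ^ ((1:ℝ)/8) with hrdef
  set s := ε ^ ((1:ℝ)/8) with hsdef
  have hp : 0 < p := Real.rpow_pos_of_pos hd _
  have hq : 0 < q := Real.rpow_pos_of_pos hL₁ _
  have hr : 0 < r := Real.rpow_pos_of_pos hL₂ _
  have hs : 0 < s := Real.rpow_pos_of_pos hε _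
  have e1 : Real.sqrt (d * L₂) = p ^ 4 * r ^ 4 := by
    rw [Real.sqrt_eq_rpow, Real.mul_rpow hd.le hL₂.le, key d hd _ 4 (by norm_num),
      key L₂ hL₂ _ 4 (by norm_num)]
  have e2 : L₁ ^ ((1:ℝ)/2) = q ^ 4 := key L₁ hL₁ _ 4 (by norm_num)
  have e3 : L₂ ^ ((1:ℝ)/4) = r ^ 2 := key L₂ hL₂ _ 2 (by norm_num)
  have e4 : d ^ ((1:ℝ)/4) = p ^ 2 := key d hd _ 2 (by norm_num)
  have e5 : L₁ ^ ((1:ℝ)/4) = q ^ 2 := key L₁ hL₁ _ 2 (by norm_num)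
  have e6 : L₂ ^ ((3:ℝ)/8) = r ^ 3 := key L₂ hL₂ _ 3 (by norm_num)
  have e7 : ε ^ (-(3:ℝ)/2) = (s ^ 12)⁻¹ := by
    rw [show (-(3:ℝ)/2) = -(3/2) by norm_num, Real.rpow_neg hε.le,
      key ε hε (3/2) 12 (by norm_num)]
  have e8 : ε ^ (-(7:ℝ)/4) = (s ^ 14)⁻¹ := by
    rw [show (-(7:ℝ)/4) = -(7/4) by norm_num, Real.rpow_neg hε.le,
      key ε hε (7/4) 14 (by norm_num)]
  have e9 : ε ^ (-(13:ℝ)/8) = (s ^ 13)⁻¹ := by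
    rw [show (-(13:ℝ)/8) = -(13/8) by norm_num, Real.rpow_neg hε.le,
      key ε hε (13/8) 13 (by norm_num)]
  have hd8 : d = p ^ 8 := by
    rw [← Real.rpow_one d]; exact key d hd 1 8 (by norm_num)
  have hL18 : L₁ = q ^ 8 := by
    rw [← Real.rpow_one L₁]; exact key L₁ hL₁ 1 8 (by norm_num)
  have hL28 : L₂ = r ^ 8 := by
    rw [← Real.rpow_one L₂]; exact key L₂ hL₂ 1 8 (by norm_num)
  have hε8 : ε = s ^ 8 := by
    rw [← Real.rpow_one ε]; exact key ε hε 1 8 (by norm_num)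
  set φ := (1 + Real.sqrt 5) / 2 with hφdef
  have h5 : Real.sqrt 5 ^ 2 = 5 := Real.sq_sqrt (by norm_num)
  have h5' : (1:ℝ) ≤ Real.sqrt 5 := by
    rw [show (1:ℝ) = Real.sqrt 1 from (Real.sqrt_one).symm]
    exact Real.sqrt_le_sqrt (by norm_num)
  have hφ1 : 1 ≤ φ := by rw [hφdef]; linarith
  have hφ : 0 < φ := lt_of_lt_of_le one_pos hφ1
  have hφsq : φ ^ 2 = φ + 1 := by rw [hφdef]; linear_combination (1/4 : ℝ) * h5
  -- key quantities
  set x := r ^ 4 * Δ * (s ^ 12)⁻¹ with hxdef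
  set A := p ^ 4 * r ^ 4 * Δ * (s ^ 12)⁻¹ with hAdef
  set B := q ^ 4 * r ^ 2 * Δ * (s ^ 14)⁻¹ with hBdef
  set G := p ^ 2 * q ^ 2 * r ^ 3 * Δ * (s ^ 13)⁻¹ with hGdef
  have hxpos : 0 < x := by positivity
  have hApos : 0 < A := by positivity
  have hBpos : 0 < B := by positivity
  have hGpos : 0 < G := by positivity
  have hApx : A = p ^ 4 * x := by rw [hAdef, hxdef]; ring
  -- 1 ≤ x
  have h2' : s ^ 12 ≤ Δ * r ^ 4 := by
    have := Real.rpow_le_rpow hε.le h2 (by norm_num : (0:ℝ) ≤ 3/2)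
    rw [Real.mul_rpow (by positivity) (by positivity), ← Real.rpow_mul hΔ.le,
      ← Real.rpow_mul hL₂.le] at this
    norm_num at this
    rwa [key ε hε (3/2) 12 (by norm_num),
      key L₂ hL₂ (1/2) 4 (by norm_num)] at this
  have hx1 : 1 ≤ x := by
    rw [hxdef, ← div_eq_mul_inv, le_div_iff₀ (by positivity), one_mul]
    exact le_of_le_of_eq h2' (mul_comm Δ (r ^ 4))
  -- B ^ 2 ≤ x ^ 3
  have h3' : s ^ 8 * q ^ 8 ≤ Δ * r ^ 8 := by
    rw [le_div_iff₀ hL₁] at h3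
    calc s ^ 8 * q ^ 8 = ε * L₁ := by rw [hε8, hL18]
    _ ≤ Δ * L₂ := h3
    _ = Δ * r ^ 8 := by rw [hL28]
  have hB2 : B ^ 2 ≤ x ^ 3 := by
    rw [hBdef, hxdef]
    rw [show (q ^ 4 * r ^ 2 * Δ * (s ^ 14)⁻¹) ^ 2 = (s ^ 8 * q ^ 8) * (r ^ 4 * Δ ^ 2 * (s ^ 36)⁻¹) from by field_simp,
      show (r ^ 4 * Δ * (s ^ 12)⁻¹) ^ 3 = (Δ * r ^ 8) * (r ^ 4 * Δ ^ 2 * (s ^ 36)⁻¹) from by field_simp]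
    exact mul_le_mul_of_nonneg_right h3' (by positivity)
  -- G² = A·B
  have hGAB : φ * (A * B) = φ * G ^ 2 := by
    rw [hAdef, hBdef, hGdef]; field_simp
  -- finish helper
  have final : ∀ y : ℝ, 0 ≤ y → y ^ 2 ≤ φ * (A * B) → y ≤ Real.sqrt φ * G := by
    intro y hy h
    have h' := Real.sqrt_le_sqrt h
    rwa [Real.sqrt_sq hy, hGAB, Real.sqrt_mul hφ.le, Real.sqrt_sq hGpos.le] at h'
  rw [e1, e2, e3, e4, e5, e6, e7, e8, e9]
  show min (A + d) B ≤ Real.sqrt φ * G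
  rw [hd8]
  rcases le_or_gt B (φ * A) with hBA | hAB
  · refine (min_le_right _ _).trans (final B hBpos.le ?_)
    calc B ^ 2 = B * B := sq B
    _ ≤ (φ * A) * B := mul_le_mul_of_nonneg_right hBA hBpos.le
    _ = φ * (A * B) := by ring
  · rcases le_or_gt x (φ * p ^ 4) with hx | hx
    · -- then B ≤ φ * A, contradiction
      exfalso
      have hK1 : 1 ≤ φ * p ^ 4 := le_trans hx1 hx
      have h1 : B ^ 2 ≤ (φ * p ^ 4 * x) ^ 2 := by
        calc B ^ 2 ≤ x ^ 3 := hB2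
        _ = x ^ 2 * x := by ring
        _ ≤ x ^ 2 * (φ * p ^ 4) := by
            exact mul_le_mul_of_nonneg_left hx (by positivity)
        _ ≤ x ^ 2 * ((φ * p ^ 4) * (φ * p ^ 4)) := by
            refine mul_le_mul_of_nonneg_left ?_ (by positivity)
            exact le_mul_of_one_le_left (by positivity) hK1
        _ = (φ * p ^ 4 * x) ^ 2 := by ring
      have h2'' : B ≤ φ * p ^ 4 * x := by
        have := Real.sqrt_le_sqrt h1
        rwa [Real.sqrt_sq hBpos.le, Real.sqrt_sq (by positivity)] at this
      rw [hApx, ← mul_assoc] at hAB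
      exact absurd h2'' (not_le.mpr hAB)
    · -- φ * p ^ 4 < x : use the A-branch
      refine (min_le_left _ _).trans (final (A + p ^ 8) (by positivity) ?_)
      have hstep : A + p ^ 8 ≤ φ * A := by
        rw [hApx]
        have h0 : (0:ℝ) ≤ (φ - 1) * p ^ 4 := by
          have h00 : (0:ℝ) ≤ φ - 1 := by linarith
          positivity
        have h01 : ((φ - 1) * p ^ 4) * (φ * p ^ 4) ≤ ((φ - 1) * p ^ 4) * x :=
          mul_le_mul_of_nonneg_left hx.le h0
        have h02 : ((φ - 1) * p ^ 4) * (φ * p ^ 4) = p ^ 8 := by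
          linear_combination (p ^ 8) * hφsq
        linarith
      have hnn : (0:ℝ) ≤ A + p ^ 8 := by positivity
      calc (A + p ^ 8) ^ 2 ≤ (φ * A) ^ 2 := pow_le_pow_left₀ hnn hstep 2
      _ = φ * ((φ * A) * A) := by ring
      _ ≤ φ * (B * A) := by
          refine mul_le_mul_of_nonneg_left ?_ hφ.le
          exact mul_le_mul_of_nonneg_right hAB.le hApos.le
      _ = φ * (A * B) := by ring
end

section
/- For every real φ > 0 and every real u with 0 ≤ u ≤ 1/φ, one has min{ (1+u)/√φ , √φ } ≤ √((1+√5)/2). -/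
/-- for `φ > 0` and `0 ≤ u ≤ 1/φ`,
`min{(1+u)/√φ, √φ} ≤ √((1+√5)/2)`. -/
theorem stmt5 (φ u : ℝ) (hφ : 0 < φ) (hu0 : 0 ≤ u) (hu : u ≤ 1 / φ) :
    min ((1 + u) / Real.sqrt φ) (Real.sqrt φ) ≤ Real.sqrt ((1 + Real.sqrt 5) / 2) := by
  set g := (1 + Real.sqrt 5) / 2 with hgdef
  have hs : Real.sqrt 5 ^ 2 = 5 := Real.sq_sqrt (by norm_num)
  have hs2 : 2 ≤ Real.sqrt 5 := by nlinarith [Real.sqrt_nonneg 5]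
  have hg : (0:ℝ) < g := by rw [hgdef]; linarith
  rcases le_total φ g with h | h
  · exact le_trans (min_le_right _ _) (Real.sqrt_le_sqrt h)
  · refine le_trans (min_le_left _ _) ?_
    rw [div_le_iff₀ (Real.sqrt_pos.2 hφ), ← Real.sqrt_mul hg.le]
    have h1u : 1 + u ≤ (φ + 1) / φ := by
      rw [le_div_iff₀ hφ]
      have h2 : u * φ ≤ 1 := by
        have := (le_div_iff₀ hφ).mp hu
        linarith
      nlinarith
    refine le_trans h1u ?_
    rw [Real.le_sqrt (by positivity), div_pow, div_le_iff₀ (by positivity)]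
    have hg2 : g ^ 2 = g + 1 := by rw [hgdef]; nlinarith
    have ht : 0 ≤ φ - g := sub_nonneg.2 h
    have hg32 : (3:ℝ)/2 ≤ g := by rw [hgdef]; linarith
    nlinarith [hg2, ht, mul_nonneg ht hg.le, mul_nonneg (mul_nonneg ht hg.le) hg.le,
      mul_nonneg (mul_nonneg (mul_nonneg ht hg.le) hg.le) hg.le,
      mul_nonneg (sq_nonneg (φ - g)) hg.le, mul_nonneg (sq_nonneg (φ - g)) (mul_nonneg hg.le hg.le),
      mul_nonneg (mul_nonneg ht ht) ht, mul_nonneg (mul_nonneg ht ht) hg.le]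
    positivity
end

section
/- Let f : ℝ^d → ℝ be twice continuously differentiable with L₂-Lipschitz Hessian, let x ∈ ℝ^d, let δ̃ > 0, and let v ∈ ℝ^d be a unit vector with vᵀ∇²f(x)v ≤ −δ̃ and ⟨v, ∇f(x)⟩ ≤ 0. Then for any R with 0 < R ≤ δ̃/L₂, f(x + Rv) − f(x) ≤ −(1/3)·δ̃·R². -/
/-- negative-curvature descent step. -/
theorem stmt7 (d : ℕ) (f : EuclideanSpace ℝ (Fin d) → ℝ) (L₂ δt R : ℝ)
    (hL₂ : 0 < L₂) (hδ : 0 < δt)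
    (hf : ContDiff ℝ 2 f)
    (hLip : ∀ x y : EuclideanSpace ℝ (Fin d),
      ‖fderiv ℝ (fderiv ℝ f) x - fderiv ℝ (fderiv ℝ f) y‖ ≤ L₂ * ‖x - y‖)
    (x v : EuclideanSpace ℝ (Fin d)) (hv : ‖v‖ = 1)
    (hcurv : fderiv ℝ (fderiv ℝ f) x v v ≤ -δt)
    (hgrad : fderiv ℝ f x v ≤ 0)
    (hR0 : 0 < R) (hR : R ≤ δt / L₂) :
    f (x + R • v) - f x ≤ -(1/3) * δt * R ^ 2 := by
  have hf1 : Differentiable ℝ f := hf.differentiable (by norm_num)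
  have hfc : ContDiff ℝ 1 (fderiv ℝ f) := hf.fderiv_right (by norm_num)
  have hf2 : Differentiable ℝ (fderiv ℝ f) := hfc.differentiable (by norm_num)
  set F := fderiv ℝ (fderiv ℝ f) with hF
  have hγ : ∀ t : ℝ, HasDerivAt (fun t : ℝ => x + t • v) v t := fun t => by
    simpa using ((hasDerivAt_id t).smul_const v).const_add x
  have hg : ∀ t : ℝ, HasDerivAt (fun t => f (x + t • v)) (fderiv ℝ f (x + t • v) v) t :=
    fun t => (hf1 _).hasFDerivAt.comp_hasDerivAt t (hγ t)
  have hg1 : ∀ t : ℝ, HasDerivAt (fun t => fderiv ℝ f (x + t • v) v) (F (x + t • v) v v) t := by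
    intro t
    have h1 : HasDerivAt (fun t : ℝ => fderiv ℝ f (x + t • v)) (F (x + t • v) v) t :=
      (hf2 _).hasFDerivAt.comp_hasDerivAt t (hγ t)
    simpa using h1.clm_apply (hasDerivAt_const t v)
  -- Lipschitz bound on the second directional derivative
  have hlip : ∀ t : ℝ, 0 ≤ t → F (x + t • v) v v - F x v v ≤ L₂ * t := by
    intro t ht
    have hnorm : ‖x + t • v - x‖ = t := by
      simp [norm_smul, hv, abs_of_nonneg ht]
    have h1 : F (x + t • v) v v - F x v v = ((F (x + t • v) - F x) v) v := by simp
    have h2 : ‖((F (x + t • v) - F x) v) v‖ ≤ ‖F (x + t • v) - F x‖ * ‖v‖ * ‖v‖ := by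
      calc ‖((F (x + t • v) - F x) v) v‖ ≤ ‖(F (x + t • v) - F x) v‖ * ‖v‖ :=
            ContinuousLinearMap.le_opNorm _ _
        _ ≤ ‖F (x + t • v) - F x‖ * ‖v‖ * ‖v‖ := by
            gcongr; exact ContinuousLinearMap.le_opNorm _ _
    have h3 : ‖F (x + t • v) - F x‖ ≤ L₂ * t := by
      have := hLip (x + t • v) x
      rwa [hnorm] at this
    calc F (x + t • v) v v - F x v v = ((F (x + t • v) - F x) v) v := h1
      _ ≤ ‖((F (x + t • v) - F x) v) v‖ := le_abs_self _
      _ ≤ ‖F (x + t • v) - F x‖ * ‖v‖ * ‖v‖ := h2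
      _ ≤ L₂ * t := by rw [hv]; simpa using h3
  -- First antitone step: P t ≤ 0 on [0, R]
  set P : ℝ → ℝ := fun t => fderiv ℝ f (x + t • v) v - fderiv ℝ f x v
      - t * (F x v v) - L₂ / 2 * t ^ 2 with hPdef
  have hP' : ∀ t : ℝ, HasDerivAt P (F (x + t • v) v v - F x v v - L₂ * t) t := by
    intro t
    have h := (((hg1 t).sub_const (fderiv ℝ f x v)).sub
        ((hasDerivAt_id t).mul_const (F x v v))).sub
        ((hasDerivAt_pow 2 t).const_mul (L₂ / 2))
    refine h.congr_deriv ?_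
    ring
  have hPle : ∀ t ∈ Set.Icc (0 : ℝ) R, P t ≤ 0 := by
    have hanti : AntitoneOn P (Set.Icc (0 : ℝ) R) := by
      apply antitoneOn_of_deriv_nonpos (convex_Icc 0 R)
      · exact fun t _ => ((hP' t).differentiableAt).continuousAt.continuousWithinAt
      · exact fun t _ => ((hP' t).differentiableAt).differentiableWithinAt
      · intro t ht
        rw [interior_Icc] at ht
        rw [(hP' t).deriv]
        have := hlip t ht.1.le
        linarith
    intro t ht
    have h0 : P 0 = 0 := by simp [hPdef]
    have := hanti (Set.left_mem_Icc.mpr hR0.le) ht ht.1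
    linarith
  -- Second antitone step: cubic Taylor bound
  set Q : ℝ → ℝ := fun t => f (x + t • v) - f x - t * (fderiv ℝ f x v)
      - t ^ 2 / 2 * (F x v v) - L₂ / 6 * t ^ 3 with hQdef
  have hQ' : ∀ t : ℝ, HasDerivAt Q (P t) t := by
    intro t
    have h := ((((hg t).sub_const (f x)).sub
        ((hasDerivAt_id t).mul_const (fderiv ℝ f x v))).sub
        (((hasDerivAt_pow 2 t).div_const 2).mul_const (F x v v))).sub
        ((hasDerivAt_pow 3 t).const_mul (L₂ / 6))
    refine h.congr_deriv ?_
    simp only [hPdef]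
    ring
  have hQR : Q R ≤ 0 := by
    have hanti : AntitoneOn Q (Set.Icc (0 : ℝ) R) := by
      apply antitoneOn_of_deriv_nonpos (convex_Icc 0 R)
      · exact fun t _ => ((hQ' t).differentiableAt).continuousAt.continuousWithinAt
      · exact fun t _ => ((hQ' t).differentiableAt).differentiableWithinAt
      · intro t ht
        rw [interior_Icc] at ht
        rw [(hQ' t).deriv]
        exact hPle t ⟨ht.1.le, ht.2.le⟩
    have h0 : Q 0 = 0 := by simp [hQdef]
    have := hanti (Set.left_mem_Icc.mpr hR0.le) (Set.right_mem_Icc.mpr hR0.le) hR0.le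
    linarith
  -- Arithmetic conclusion
  have hLR : L₂ * R ≤ δt := by
    rw [le_div_iff₀ hL₂] at hR
    linarith [hR]
  have hQRexp : f (x + R • v) - f x ≤ R * (fderiv ℝ f x v)
      + R ^ 2 / 2 * (F x v v) + L₂ / 6 * R ^ 3 := by
    simp only [hQdef] at hQR
    linarith
  nlinarith [mul_nonneg hR0.le (neg_nonneg.mpr hgrad), sq_nonneg R,
    mul_le_mul_of_nonneg_left hcurv (by positivity : (0:ℝ) ≤ R ^ 2 / 2),
    mul_le_mul_of_nonneg_right hLR (sq_nonneg R)]
end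

section
/- Let f : ℝ^d → ℝ be twice continuously differentiable with L₂-Lipschitz Hessian, let x ∈ ℝ^d, and let Δₓ = f(x) − inf_z f(z) be finite. Let H be a symmetric d×d matrix with ‖H − ∇²f(x)‖ ≤ δ, let Π be an orthogonal projection onto an invariant subspace of H on which all eigenvalues of H have absolute value greater than ℓ, and suppose ℓ ≥ max{24 Δₓ^{1/3} L₂^{2/3}, 2δ}. Then the vector u = −(Π H Π)† ∇f(x) satisfies ‖u‖ ≤ 2√(3Δₓ/ℓ). -/
open scoped RealInnerProductSpace

lemma taylor2 {E : Type*} [NormedAddCommGroup E] [NormedSpace ℝ E]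
    (f : E → ℝ) (L₂ : ℝ) (hL₂ : 0 ≤ L₂) (hf : ContDiff ℝ 2 f)
    (hLip : ∀ x y : E,
      ‖fderiv ℝ (fderiv ℝ f) x - fderiv ℝ (fderiv ℝ f) y‖ ≤ L₂ * ‖x - y‖)
    (x s : E) :
    f (x + s) ≤ f x + fderiv ℝ f x s + (1/2) * fderiv ℝ (fderiv ℝ f) x s s
      + L₂/2 * ‖s‖^3 := by
  have hdf : Differentiable ℝ (fderiv ℝ f) :=
    (hf.fderiv_right (m := 1) (by norm_num)).differentiable one_ne_zero
  have hdff : Differentiable ℝ f := hf.differentiable two_ne_zero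
  set c : ℝ → E := fun t => x + t • s with hc_def
  have hc : ∀ t : ℝ, HasDerivAt c s t := by
    intro t
    have : HasDerivAt (fun t : ℝ => t • s) ((1:ℝ) • s) t :=
      (hasDerivAt_id t).smul_const s
    simpa [hc_def] using this.const_add x
  have hc0 : c 0 = x := by simp [hc_def]
  have hc1 : c 1 = x + s := by simp [hc_def]
  set φ₁ : ℝ → ℝ := fun t => fderiv ℝ f (c t) s with hφ₁_def
  set φ₂ : ℝ → ℝ := fun t => fderiv ℝ (fderiv ℝ f) (c t) s s with hφ₂_def
  have hφ : ∀ t : ℝ, HasDerivAt (fun t => f (c t)) (φ₁ t) t := fun t =>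
    (hdff.differentiableAt.hasFDerivAt).comp_hasDerivAt t (hc t)
  have hφ₁ : ∀ t : ℝ, HasDerivAt φ₁ (φ₂ t) t := by
    intro t
    have h1 : HasDerivAt (fun t => fderiv ℝ f (c t))
        (fderiv ℝ (fderiv ℝ f) (c t) s) t :=
      (hdf.differentiableAt.hasFDerivAt).comp_hasDerivAt t (hc t)
    have h2 := h1.clm_apply (hasDerivAt_const t s)
    simpa using h2
  have hφ₂bound : ∀ t ∈ Set.Icc (0:ℝ) 1, φ₂ t ≤ φ₂ 0 + L₂ * ‖s‖^3 := by
    intro t ht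
    set A := fderiv ℝ (fderiv ℝ f) (c t) with hA
    set B := fderiv ℝ (fderiv ℝ f) (c 0) with hB
    have key : φ₂ t - φ₂ 0 = ((A - B) s) s := by
      simp [hφ₂_def, ← hA, ← hB, ContinuousLinearMap.sub_apply]
    have h1 : ((A - B) s) s ≤ ‖A - B‖ * ‖s‖ * ‖s‖ := by
      calc ((A - B) s) s ≤ ‖((A - B) s) s‖ := le_abs_self _
        _ ≤ ‖(A - B) s‖ * ‖s‖ := ((A - B) s).le_opNorm s
        _ ≤ (‖A - B‖ * ‖s‖) * ‖s‖ := by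
            gcongr
            exact (A - B).le_opNorm s
    have h2 : ‖A - B‖ ≤ L₂ * (t * ‖s‖) := by
      have := hLip (c t) (c 0)
      have hct : c t - c 0 = t • s := by simp [hc_def]
      rw [hct] at this
      calc ‖A - B‖ ≤ L₂ * ‖t • s‖ := this
        _ = L₂ * (|t| * ‖s‖) := by rw [norm_smul, Real.norm_eq_abs]
        _ = L₂ * (t * ‖s‖) := by rw [abs_of_nonneg ht.1]
    have ht1 : t ≤ 1 := ht.2
    have h3 : ‖A - B‖ * ‖s‖ * ‖s‖ ≤ L₂ * (t * ‖s‖) * ‖s‖ * ‖s‖ :=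
      mul_le_mul_of_nonneg_right
        (mul_le_mul_of_nonneg_right h2 (norm_nonneg s)) (norm_nonneg s)
    have hs3 : 0 ≤ L₂ * ‖s‖ ^ 3 := mul_nonneg hL₂ (pow_nonneg (norm_nonneg s) 3)
    have h4 : L₂ * (t * ‖s‖) * ‖s‖ * ‖s‖ ≤ L₂ * ‖s‖ ^ 3 := by
      have he : L₂ * (t * ‖s‖) * ‖s‖ * ‖s‖ = t * (L₂ * ‖s‖ ^ 3) := by ring
      rw [he]
      calc t * (L₂ * ‖s‖ ^ 3) ≤ 1 * (L₂ * ‖s‖ ^ 3) :=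
            mul_le_mul_of_nonneg_right ht1 hs3
        _ = L₂ * ‖s‖ ^ 3 := one_mul _
    linarith [key, h1, h3, h4]
  set K : ℝ := φ₂ 0 + L₂ * ‖s‖^3 with hK
  set χ : ℝ → ℝ := fun t => φ₁ t - φ₁ 0 - t * K with hχ_def
  have hχd : ∀ t : ℝ, HasDerivAt χ (φ₂ t - K) t := by
    intro t
    have := ((hφ₁ t).sub_const (φ₁ 0)).sub (hasDerivAt_mul_const (x := t) K)
    exact this
  have hχle : ∀ t ∈ Set.Icc (0:ℝ) 1, χ t ≤ 0 := by
    intro t ht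
    have hanti : AntitoneOn χ (Set.Icc 0 1) := by
      apply antitoneOn_of_deriv_nonpos (convex_Icc 0 1)
      · exact Continuous.continuousOn (by
          exact continuous_iff_continuousAt.2 fun t => (hχd t).continuousAt)
      · intro t' _
        exact (hχd t').differentiableAt.differentiableWithinAt
      · intro t' ht'
        rw [interior_Icc] at ht'
        rw [(hχd t').deriv]
        have := hφ₂bound t' ⟨le_of_lt ht'.1, le_of_lt ht'.2⟩
        linarith
    have := hanti (Set.left_mem_Icc.2 zero_le_one) ht ht.1
    simpa [hχ_def] using this
  set ψ : ℝ → ℝ := fun t => f (c t) - f (c 0) - t * φ₁ 0 - t^2/2 * K with hψ_def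
  have hψd : ∀ t : ℝ, HasDerivAt ψ (χ t) t := by
    intro t
    have h1 := (((hφ t).sub_const (f (c 0))).sub
        (hasDerivAt_mul_const (x := t) (φ₁ 0))).sub
        (((hasDerivAt_pow 2 t).div_const 2).mul_const K)
    convert h1 using 1
    show φ₁ t - φ₁ 0 - t * K = _
    push_cast
    ring
    all_goals rfl
  have hψanti : AntitoneOn ψ (Set.Icc 0 1) := by
    apply antitoneOn_of_deriv_nonpos (convex_Icc 0 1)
    · exact Continuous.continuousOn (by
        exact continuous_iff_continuousAt.2 fun t => (hψd t).continuousAt)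
    · intro t' _
      exact (hψd t').differentiableAt.differentiableWithinAt
    · intro t' ht'
      rw [interior_Icc] at ht'
      rw [(hψd t').deriv]
      exact hχle t' ⟨le_of_lt ht'.1, le_of_lt ht'.2⟩
  have := hψanti (Set.left_mem_Icc.2 zero_le_one) (Set.right_mem_Icc.2 zero_le_one)
    zero_le_one
  simp only [hψ_def, hc0, hc1] at this
  norm_num at this
  have e1 : φ₁ 0 = fderiv ℝ f x s := by simp only [hφ₁_def, hc0]
  have e2 : φ₂ 0 = fderiv ℝ (fderiv ℝ f) x s s := by simp only [hφ₂_def, hc0]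
  rw [e1, hK, e2] at this
  linarith

set_option maxHeartbeats 1000000 in
/-- the restricted Newton step `u = -(Π H Π)† ∇f(x)` (with `H = Σ λⱼ hⱼhⱼᵀ`
`δ`-close to the Hessian, `Π` the projection onto eigenvectors with `|λⱼ| > ℓ`, so that
`(ΠHΠ)†∇f(x) = Σ_{|λⱼ|>ℓ} λⱼ⁻¹ ⟪hⱼ, ∇f(x)⟫ hⱼ`) satisfies `‖u‖ ≤ 2√(3Δₓ/ℓ)`. -/
theorem stmt8 (d : ℕ) (f : EuclideanSpace ℝ (Fin d) → ℝ) (L₂ δ ℓ Δx : ℝ)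
    (hL₂ : 0 < L₂) (hδ : 0 ≤ δ) (hℓpos : 0 < ℓ)
    (hf : ContDiff ℝ 2 f)
    (hLip : ∀ x y : EuclideanSpace ℝ (Fin d),
      ‖fderiv ℝ (fderiv ℝ f) x - fderiv ℝ (fderiv ℝ f) y‖ ≤ L₂ * ‖x - y‖)
    (x : EuclideanSpace ℝ (Fin d))
    (hbdd : BddBelow (Set.range f))
    (hΔx : Δx = f x - ⨅ z, f z)
    (lam : Fin d → ℝ) (h : Fin d → EuclideanSpace ℝ (Fin d)) (hon : Orthonormal ℝ h)
    (hH : ∀ v w : EuclideanSpace ℝ (Fin d),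
      |(∑ j, lam j * ⟪h j, v⟫ * ⟪h j, w⟫) - fderiv ℝ (fderiv ℝ f) x v w|
        ≤ δ * ‖v‖ * ‖w‖)
    (hℓ : max (24 * Δx ^ ((1:ℝ)/3) * L₂ ^ ((2:ℝ)/3)) (2 * δ) ≤ ℓ)
    (u : EuclideanSpace ℝ (Fin d))
    (hu : u = -∑ j ∈ Finset.univ.filter (fun j => ℓ < |lam j|),
        ((lam j)⁻¹ * ⟪h j, gradient f x⟫) • h j) :
    ‖u‖ ≤ 2 * Real.sqrt (3 * Δx / ℓ) := by
  classical
  have hΔx0 : 0 ≤ Δx := by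
    rw [hΔx]
    have := ciInf_le hbdd x
    linarith
  have hδℓ : 2 * δ ≤ ℓ := le_trans (le_max_right _ _) hℓ
  have h24 : 24 * Δx ^ ((1:ℝ)/3) * L₂ ^ ((2:ℝ)/3) ≤ ℓ := le_trans (le_max_left _ _) hℓ
  have hcube : 13824 * Δx * L₂^2 ≤ ℓ^3 := by
    have hA : (0:ℝ) ≤ Δx ^ ((1:ℝ)/3) := Real.rpow_nonneg hΔx0 _
    have hB : (0:ℝ) ≤ L₂ ^ ((2:ℝ)/3) := Real.rpow_nonneg hL₂.le _
    have h1 : (24 * Δx ^ ((1:ℝ)/3) * L₂ ^ ((2:ℝ)/3))^3 ≤ ℓ^3 :=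
      pow_le_pow_left₀ (by positivity) h24 3
    have e1 : (Δx ^ ((1:ℝ)/3))^3 = Δx := by
      rw [← Real.rpow_natCast (Δx ^ ((1:ℝ)/3)) 3, ← Real.rpow_mul hΔx0]
      norm_num
    have e2 : (L₂ ^ ((2:ℝ)/3))^3 = L₂^2 := by
      rw [← Real.rpow_natCast (L₂ ^ ((2:ℝ)/3)) 3, ← Real.rpow_mul hL₂.le]
      norm_num
    calc 13824*Δx*L₂^2 = (24 * Δx^((1:ℝ)/3) * L₂^((2:ℝ)/3))^3 := by
          rw [mul_pow, mul_pow, e1, e2]; ring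
      _ ≤ ℓ^3 := h1
  set g : EuclideanSpace ℝ (Fin d) := gradient f x with hg
  have hgrad : ∀ v : EuclideanSpace ℝ (Fin d), ⟪g, v⟫ = fderiv ℝ f x v := by
    intro v
    rw [hg]
    exact InnerProductSpace.toDual_symm_apply
  set T := Finset.univ.filter (fun j => ℓ < |lam j|) with hT
  have hlamT : ∀ j ∈ T, ℓ < |lam j| := by
    intro j hj
    exact (Finset.mem_filter.mp hj).2
  set a : Fin d → ℝ := fun j => ⟪h j, g⟫ with ha
  set s : EuclideanSpace ℝ (Fin d) := -∑ j ∈ T, (|lam j|⁻¹ * a j) • h j with hs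
  have horth := orthonormal_iff_ite.mp hon
  -- inner products with s
  have hinner : ∀ i, ⟪h i, s⟫ = if i ∈ T then -(|lam i|⁻¹ * a i) else 0 := by
    intro i
    rw [hs, inner_neg_right, inner_sum]
    simp only [real_inner_smul_right, horth, mul_ite, mul_one, mul_zero,
      Finset.sum_ite_eq]
    split_ifs <;> simp
  -- norms
  set S2 : ℝ := ∑ j ∈ T, ((lam j)⁻¹ * a j)^2 with hS2
  have hsum_norm : ∀ c : Fin d → ℝ,
      ‖∑ j ∈ T, c j • h j‖^2 = ∑ j ∈ T, (c j)^2 := by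
    intro c
    rw [← real_inner_self_eq_norm_sq, sum_inner]
    refine Finset.sum_congr rfl fun j hj => ?_
    rw [real_inner_smul_left, hon.inner_right_sum _ hj, sq]
  have habs_sq : ∀ j, (|lam j|⁻¹ * a j)^2 = ((lam j)⁻¹ * a j)^2 := by
    intro j
    rw [mul_pow, mul_pow, ← abs_inv, sq_abs]
  have hns : ‖s‖^2 = S2 := by
    rw [hs, norm_neg, hsum_norm]
    exact Finset.sum_congr rfl fun j _ => habs_sq j
  have hnu : ‖u‖^2 = S2 := by
    rw [hu, norm_neg, hsum_norm]
  have hus : ‖u‖ = ‖s‖ := by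
    have : ‖u‖^2 = ‖s‖^2 := by rw [hns, hnu]
    have h1 := congrArg Real.sqrt this
    rwa [Real.sqrt_sq (norm_nonneg u), Real.sqrt_sq (norm_nonneg s)] at h1
  set S1 : ℝ := ∑ j ∈ T, |lam j|⁻¹ * a j^2 with hS1
  have hS1nn : 0 ≤ S1 := Finset.sum_nonneg fun j _ => by positivity
  have hS2nn : 0 ≤ S2 := Finset.sum_nonneg fun j _ => by positivity
  have hS1S2 : ℓ * S2 ≤ S1 := by
    rw [hS2, hS1, Finset.mul_sum]
    refine Finset.sum_le_sum fun j hj => ?_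
    have hlj : ℓ < |lam j| := hlamT j hj
    have h0 : (0:ℝ) < |lam j| := lt_trans hℓpos hlj
    have hne : lam j ≠ 0 := abs_pos.mp h0
    have e : ((lam j)⁻¹ * a j)^2 = a j^2 / |lam j|^2 := by
      rw [sq_abs, mul_pow, inv_pow, div_eq_mul_inv, mul_comm (a j ^ 2) ((lam j ^ 2)⁻¹)]
    rw [e]
    have h1 : ℓ * (a j^2 / |lam j|^2) = (ℓ / |lam j|) * (a j^2 / |lam j|) := by
      rw [div_mul_div_comm, ← mul_div_assoc, ← sq]
    have h2 : ℓ / |lam j| ≤ 1 := (div_le_one h0).mpr hlj.le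
    have h3 : 0 ≤ a j^2 / |lam j| := by positivity
    calc ℓ * (a j^2/|lam j|^2) = (ℓ/|lam j|) * (a j^2/|lam j|) := h1
      _ ≤ 1 * (a j^2/|lam j|) := mul_le_mul_of_nonneg_right h2 h3
      _ = |lam j|⁻¹ * a j^2 := by rw [one_mul, div_eq_mul_inv, mul_comm]
  have hQle : (∑ j ∈ T, (lam j)⁻¹ * a j^2) ≤ S1 := by
    refine Finset.sum_le_sum fun j _ => ?_
    have : (lam j)⁻¹ ≤ |lam j|⁻¹ := by
      rw [← abs_inv]
      exact le_abs_self _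
    exact mul_le_mul_of_nonneg_right this (sq_nonneg _)
  -- quadratic form of s
  have hQ : (∑ j, lam j * ⟪h j, s⟫ * ⟪h j, s⟫) = ∑ j ∈ T, (lam j)⁻¹ * a j^2 := by
    rw [← Finset.sum_subset (Finset.subset_univ T) (fun j _ hj => by
      rw [hinner]; simp [hj])]
    refine Finset.sum_congr rfl fun j hj => ?_
    have hlj : ℓ < |lam j| := hlamT j hj
    have hne : lam j ≠ 0 := abs_pos.mp (lt_trans hℓpos hlj)
    rw [hinner, if_pos hj]
    have e3 : |lam j|⁻¹ * |lam j|⁻¹ = (lam j)⁻¹ * (lam j)⁻¹ := by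
      rw [← mul_inv, ← mul_inv, abs_mul_abs_self]
    calc lam j * -(|lam j|⁻¹ * a j) * -(|lam j|⁻¹ * a j)
        = (|lam j|⁻¹ * |lam j|⁻¹) * (lam j * a j * a j) := by ring
      _ = ((lam j)⁻¹ * (lam j)⁻¹) * (lam j * a j * a j) := by rw [e3]
      _ = (lam j)⁻¹ * a j^2 * ((lam j)⁻¹ * lam j) := by ring
      _ = (lam j)⁻¹ * a j^2 := by rw [inv_mul_cancel₀ hne, mul_one]
  -- linear term
  have hcomm : ∀ j, (⟪g, h j⟫ : ℝ) = a j := by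
    intro j
    rw [ha]
    exact real_inner_comm _ _
  have hgs : ⟪g, s⟫ = -S1 := by
    rw [hs, inner_neg_right, inner_sum, hS1, neg_inj]
    refine Finset.sum_congr rfl fun j hj => ?_
    rw [real_inner_smul_right, hcomm]
    ring
  -- key inequality from Taylor expansion
  have KEY : ∀ c : ℝ, 0 < c → c ≤ 1 →
      ℓ/2 * c * ‖s‖^2 - δ/2 * c^2 * ‖s‖^2 - L₂/2 * c^3 * ‖s‖^3 ≤ Δx := by
    intro c hc0 hc1
    have ht := taylor2 f L₂ hL₂.le hf hLip x (c • s)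
    have hder : fderiv ℝ f x (c • s) = c * (-S1) := by
      rw [← hgrad, real_inner_smul_right, hgs]
    have hnormcs : ‖c • s‖ = c * ‖s‖ := by
      rw [norm_smul, Real.norm_eq_abs, abs_of_pos hc0]
    have hquad : fderiv ℝ (fderiv ℝ f) x (c • s) (c • s)
        ≤ c^2 * (∑ j ∈ T, (lam j)⁻¹ * a j^2) + δ * (c^2 * ‖s‖^2) := by
      have hh := (abs_le.mp (hH (c • s) (c • s))).1
      have hQcs : (∑ j, lam j * ⟪h j, (c • s)⟫ * ⟪h j, (c • s)⟫)
          = c^2 * (∑ j ∈ T, (lam j)⁻¹ * a j^2) := by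
        rw [← hQ, Finset.mul_sum]
        refine Finset.sum_congr rfl fun j _ => ?_
        rw [real_inner_smul_right]
        ring
      rw [hQcs] at hh
      have heq : δ * ‖c • s‖ * ‖c • s‖ = δ * (c^2 * ‖s‖^2) := by rw [hnormcs]; ring
      linarith [hh, heq.le, heq.ge]
    have hlow : f x - Δx ≤ f (x + c • s) := by
      rw [hΔx]
      have h2 := ciInf_le hbdd (x + c • s)
      linarith
    have hQle2 : c^2 * (∑ j ∈ T, (lam j)⁻¹ * a j^2) ≤ c^2 * S1 :=
      mul_le_mul_of_nonneg_left hQle (by positivity)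
    rw [hder, hnormcs] at ht
    have hc2 : c^2 ≤ c := by nlinarith
    have hmono : c^2 * S1 ≤ c * S1 := mul_le_mul_of_nonneg_right hc2 hS1nn
    have hsl : ℓ * ‖s‖^2 ≤ S1 := by rw [hns]; exact hS1S2
    have hfinal : ℓ/2 * c * ‖s‖^2 ≤ c * S1 - c^2/2 * S1 := by
      have h5 : c/2 * (ℓ * ‖s‖^2) ≤ c/2 * S1 :=
        mul_le_mul_of_nonneg_left hsl (by positivity)
      nlinarith [hmono]
    have hcube3 : (c * ‖s‖)^3 = c^3 * ‖s‖^3 := by ring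
    linarith [ht, hquad, hQle2, hlow, hfinal, hcube3.le, hcube3.ge]
  -- endgame
  set ρ := ℓ/(6*L₂) with hρ
  have hρpos : 0 < ρ := by positivity
  have hLρ : L₂ * ρ = ℓ/6 := by rw [hρ]; field_simp
  by_cases hcase : ‖s‖ ≤ ρ
  · -- small step case
    have k1 := KEY 1 one_pos le_rfl
    norm_num at k1
    have hδ2 : δ/2 * ‖s‖^2 ≤ ℓ/4 * ‖s‖^2 :=
      mul_le_mul_of_nonneg_right (by linarith) (sq_nonneg _)
    have hs3 : L₂/2 * ‖s‖^3 ≤ ℓ/12 * ‖s‖^2 := by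
      have h6 : ‖s‖ * ‖s‖^2 ≤ ρ * ‖s‖^2 :=
        mul_le_mul_of_nonneg_right hcase (sq_nonneg _)
      have h7 : L₂/2 * (‖s‖ * ‖s‖^2) ≤ L₂/2 * (ρ * ‖s‖^2) :=
        mul_le_mul_of_nonneg_left h6 (by positivity)
      have h8 : L₂/2 * (ρ * ‖s‖^2) = ℓ/12 * ‖s‖^2 := by
        linear_combination (‖s‖^2/2) * hLρ
      nlinarith [h7, h8.le, h8.ge]
    have hfin : ℓ/6 * ‖s‖^2 ≤ Δx := by linarith
    rw [hus]
    have h3nn : (0:ℝ) ≤ 3 * Δx / ℓ := by positivity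
    have hsq := Real.sq_sqrt h3nn
    have hrnn := Real.sqrt_nonneg (3 * Δx / ℓ)
    have h12 : (Real.sqrt (3 * Δx / ℓ))^2 * ℓ = 3 * Δx := by
      rw [hsq]
      field_simp
    by_contra hcon
    push_neg at hcon
    have hNpos : 0 ≤ ‖s‖ := norm_nonneg s
    have h2r : 0 < ‖s‖ := lt_of_le_of_lt (by positivity) hcon
    have hprod : (‖s‖ - 2 * Real.sqrt (3 * Δx / ℓ)) * (‖s‖ + 2 * Real.sqrt (3 * Δx / ℓ)) > 0 :=
      mul_pos (by linarith) (by positivity)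
    nlinarith [hfin, h12, hprod, hℓpos, mul_le_mul_of_nonneg_left hfin (le_of_lt (show (0:ℝ) < 6 by norm_num))]
  · -- large step case: contradiction
    exfalso
    push_neg at hcase
    have hN : 0 < ‖s‖ := lt_trans hρpos hcase
    have hcc0 : 0 < ρ / ‖s‖ := by positivity
    have hcc1 : ρ / ‖s‖ ≤ 1 := by
      rw [div_le_one hN]
      exact hcase.le
    have k := KEY (ρ / ‖s‖) hcc0 hcc1
    have hccN : ρ / ‖s‖ * ‖s‖ = ρ := div_mul_cancel₀ _ hN.ne'
    have e1 : ρ / ‖s‖ * ‖s‖^2 = ρ * ‖s‖ := by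
      rw [sq, ← mul_assoc, hccN]
    have e2 : (ρ / ‖s‖)^2 * ‖s‖^2 = ρ^2 := by rw [← mul_pow, hccN]
    have e3 : (ρ / ‖s‖)^3 * ‖s‖^3 = ρ^3 := by rw [← mul_pow, hccN]
    have k2 : ℓ/2 * (ρ * ‖s‖) - δ/2 * ρ^2 - L₂/2 * ρ^3 ≤ Δx := by
      nlinarith [k, e1, e2, e3]
    have hρ2N : ρ^2 ≤ ρ * ‖s‖ := by
      rw [sq]
      exact mul_le_mul_of_nonneg_left hcase.le hρpos.le
    have hlρN : ℓ/2 * ρ^2 ≤ ℓ/2 * (ρ * ‖s‖) :=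
      mul_le_mul_of_nonneg_left hρ2N (by positivity)
    have hLρ3 : L₂/2 * ρ^3 = ℓ/12 * ρ^2 := by
      linear_combination (ρ^2/2) * hLρ
    have hδρ : δ/2 * ρ^2 ≤ ℓ/4 * ρ^2 :=
      mul_le_mul_of_nonneg_right (by linarith) (sq_nonneg _)
    have hfin : ℓ/6 * ρ^2 ≤ Δx := by linarith
    have hpos : 0 < ℓ/6 * ρ^2 := by positivity
    have e4 : ℓ/6 * ρ^2 * (216 * L₂^2) = ℓ^3 := by
      rw [hρ]
      field_simp
      ring
    have hX : 216 * L₂^2 * (ℓ/6 * ρ^2) ≤ 216 * L₂^2 * Δx :=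
      mul_le_mul_of_nonneg_left hfin (by positivity)
    have hΔpos : 0 < Δx := lt_of_lt_of_le hpos hfin
    have hΔL : 0 < Δx * L₂^2 := mul_pos hΔpos (pow_pos hL₂ 2)
    linarith [hX, e4, hcube, hΔL]
end

section
/- Let Ā ∈ ℝ^{d×d} be symmetric with Ā ⪯ I, let 0 < η ≤ 1/4 and 0 < θ ≤ 1, and let g(x) = ⟨c, x⟩ + ½ xᵀ Ā x be a quadratic function restricted to a subspace on which Ā ⪰ −(θ/η)·I. Consider iterates x^(k+1) = y^(k) − η(Āy^(k) + c + ι^(k)) with y^(k) = x^(k) + (1−θ)(x^(k) − x^(k−1)). Then for any α > 0: g(x^(k+1)) − g(x^(k)) ≤ −½(x^(k) − y^(k))ᵀĀ(x^(k) − y^(k)) + ‖ι^(k)‖²/(2α) + (1/(2η))·( ‖x^(k) − y^(k)‖² − (1 − αη)·‖x^(k+1) − x^(k)‖² ). -/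
open scoped RealInnerProductSpace

/-- Euclidean version of Lemma '01-quadratic-decomposition': one-step
inequality for the AGD update on the quadratic `g(x) = ⟪c, x⟫ + ½⟪x, Āx⟫`. -/
theorem stmt16 (n : ℕ) (η θ α : ℝ)
    (hη0 : 0 < η) (hη : η ≤ 1/4) (hθ0 : 0 < θ) (hθ1 : θ ≤ 1) (hα : 0 < α)
    (Ab : EuclideanSpace ℝ (Fin n) →L[ℝ] EuclideanSpace ℝ (Fin n))
    (hsym : ∀ v w, ⟪Ab v, w⟫ = ⟪v, Ab w⟫)
    (hub : ∀ v, ⟪v, Ab v⟫ ≤ ‖v‖ ^ 2)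
    (hlb : ∀ v, -(θ / η) * ‖v‖ ^ 2 ≤ ⟪v, Ab v⟫)
    (c ι xk xkm1 y xnext : EuclideanSpace ℝ (Fin n))
    (hy : y = xk + (1 - θ) • (xk - xkm1))
    (hnext : xnext = y - η • (Ab y + c + ι)) :
    (⟪c, xnext⟫ + (1/2) * ⟪xnext, Ab xnext⟫) - (⟪c, xk⟫ + (1/2) * ⟪xk, Ab xk⟫)
      ≤ -(1/2) * ⟪xk - y, Ab (xk - y)⟫ + ‖ι‖ ^ 2 / (2 * α)
        + (1 / (2 * η)) * (‖xk - y‖ ^ 2 - (1 - α * η) * ‖xnext - xk‖ ^ 2) := by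
  have hηne : η ≠ 0 := ne_of_gt hη0
  have hc : c + Ab y = η⁻¹ • (y - xnext) - ι := by
    rw [hnext]; match_scalars <;> field_simp <;> ring
  have key : (⟪c, xnext⟫ + (1/2) * ⟪xnext, Ab xnext⟫) - (⟪c, xk⟫ + (1/2) * ⟪xk, Ab xk⟫)
      = ⟪c + Ab y, xnext - xk⟫ + (1/2) * ⟪xnext - y, Ab (xnext - y)⟫
        - (1/2) * ⟪xk - y, Ab (xk - y)⟫ := by
    simp only [map_sub, inner_sub_left, inner_sub_right, inner_add_left]
    have h1 : ⟪xnext, Ab y⟫ = ⟪y, Ab xnext⟫ := by rw [real_inner_comm, hsym]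
    have h2 : ⟪xk, Ab y⟫ = ⟪y, Ab xk⟫ := by rw [real_inner_comm, hsym]
    have h3 : ⟪xnext, Ab xk⟫ = ⟪xk, Ab xnext⟫ := by rw [real_inner_comm, hsym]
    have h4 := hsym y xnext
    have h5 := hsym y xk
    ring_nf
    linarith [h1, h2, h3, h4, h5]
  have hcr : ⟪c + Ab y, xnext - xk⟫
      = -(η⁻¹ * ⟪xnext - y, xnext - xk⟫) - ⟪ι, xnext - xk⟫ := by
    rw [hc]
    have h0 : (η⁻¹ • (y - xnext) - ι : EuclideanSpace ℝ (Fin n))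
        = -(η⁻¹ • (xnext - y)) - ι := by module
    rw [h0, inner_sub_left, inner_neg_left, real_inner_smul_left]
  have htp : 2 * ⟪xnext - y, xnext - xk⟫
      = ‖xnext - y‖ ^ 2 + ‖xnext - xk‖ ^ 2 - ‖xk - y‖ ^ 2 := by
    have h : xk - y = (xnext - y) - (xnext - xk) := by abel
    have hh := norm_sub_sq_real (xnext - y) (xnext - xk)
    rw [← h] at hh
    linarith
  have hyoung : -⟪ι, xnext - xk⟫ ≤ ‖ι‖ ^ 2 / (2 * α) + α / 2 * ‖xnext - xk‖ ^ 2 := by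
    have hcs : -⟪ι, xnext - xk⟫ ≤ ‖ι‖ * ‖xnext - xk‖ := by
      have h1 := abs_real_inner_le_norm ι (xnext - xk)
      have h2 := neg_abs_le ⟪ι, xnext - xk⟫
      linarith
    have h2a : (0:ℝ) < 2 * α := by linarith
    have heq : ‖ι‖ ^ 2 / (2 * α) + α / 2 * ‖xnext - xk‖ ^ 2 - ‖ι‖ * ‖xnext - xk‖
        = (‖ι‖ - α * ‖xnext - xk‖) ^ 2 / (2 * α) := by field_simp; ring
    nlinarith [div_nonneg (sq_nonneg (‖ι‖ - α * ‖xnext - xk‖)) h2a.le]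
  have hubp := hub (xnext - y)
  have hinv : η⁻¹ ≥ 4 := by
    rw [ge_iff_le, le_inv_comm₀ (by norm_num) hη0]; linarith
  have hmul : η * η⁻¹ = 1 := mul_inv_cancel₀ hηne
  have h5 : (1/2) * ⟪xnext - y, Ab (xnext - y)⟫ ≤ η⁻¹/2 * ‖xnext - y‖ ^ 2 := by
    nlinarith [hubp, hinv, sq_nonneg ‖xnext - y‖]
  have h6 : η⁻¹ * ⟪xnext - y, xnext - xk⟫
      = η⁻¹/2 * ‖xnext - y‖ ^ 2 + η⁻¹/2 * ‖xnext - xk‖ ^ 2 - η⁻¹/2 * ‖xk - y‖ ^ 2 := by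
    linear_combination (η⁻¹/2) * htp
  have h7 : (1 / (2 * η)) * (‖xk - y‖ ^ 2 - (1 - α * η) * ‖xnext - xk‖ ^ 2)
      = η⁻¹/2 * ‖xk - y‖ ^ 2 - η⁻¹/2 * ‖xnext - xk‖ ^ 2 + α/2 * ‖xnext - xk‖ ^ 2 := by
    field_simp; ring
  rw [key, hcr]
  linarith [h5, h6, h7, hyoung]
end

section
/- Let f : ℝ^d → ℝ be twice continuously differentiable with L₂-Lipschitz Hessian, Δₓ = f(x) − inf_z f(z) < ∞, and let H be symmetric with ‖H − ∇²f(x)‖ ≤ δ. With Π_large the projection onto eigenvectors of H with |eigenvalue| > ℓ and Π_small = I − Π_large, set y = x − (Π_large H Π_large)† ∇f(x). If ℓ ≥ max{24 Δₓ^{1/3} L₂^{2/3}, 2δ}, then ‖Π_large ∇f(y)‖ ≤ 2δ√(3Δₓ/ℓ) + 6L₂Δₓ/ℓ and ‖Π_small ∇f(y)‖ ≤ ‖Π_small ∇f(x)‖ + 2δ√(3Δₓ/ℓ) + 6L₂Δₓ/ℓ. -/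
open scoped RealInnerProductSpace

set_option maxHeartbeats 2000000

section TaylorAux

variable {E : Type*} [NormedAddCommGroup E] [InnerProductSpace ℝ E]

/-- Sharp quadratic bound on the remainder of the first-order expansion of the derivative. -/
lemma stmt17_grad_taylor {f : E → ℝ} (hf : ContDiff ℝ 2 f) {L₂ : ℝ} (hL₂ : 0 ≤ L₂)
    (hLip : ∀ a b : E, ‖fderiv ℝ (fderiv ℝ f) a - fderiv ℝ (fderiv ℝ f) b‖ ≤ L₂ * ‖a - b‖)
    (x u : E) :
    ‖fderiv ℝ f (x + u) - fderiv ℝ f x - fderiv ℝ (fderiv ℝ f) x u‖ ≤ L₂ / 2 * ‖u‖ ^ 2 := by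
  have hF : ContDiff ℝ 1 (fderiv ℝ f) := hf.fderiv_right (by norm_num)
  have hFd : Differentiable ℝ (fderiv ℝ f) := hF.differentiable (by norm_num)
  have hFc : Continuous (fderiv ℝ (fderiv ℝ f)) := hF.continuous_fderiv (by norm_num)
  set F := fderiv ℝ f with hFdef
  set B := fderiv ℝ F with hBdef
  have hline : ∀ t : ℝ, HasDerivAt (fun s : ℝ => x + s • u) u t := by
    intro t
    simpa using ((hasDerivAt_id t).smul_const u).const_add x
  have hderiv : ∀ t : ℝ, HasDerivAt (fun s : ℝ => F (x + s • u) - s • (B x u))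
      (B (x + t • u) u - B x u) t := by
    intro t
    have h1 : HasDerivAt (fun s : ℝ => F (x + s • u)) (B (x + t • u) u) t := by
      have := (hFd (x + t • u)).hasFDerivAt.comp_hasDerivAt t (hline t)
      exact this
    have h2 : HasDerivAt (fun s : ℝ => s • (B x u)) (B x u) t := by
      simpa using (hasDerivAt_id t).smul_const (B x u)
    exact h1.sub h2
  have hFTC : (∫ t in (0:ℝ)..1, (B (x + t • u) u - B x u))
      = (F (x + u) - 1 • (B x u)) - (F (x + 0 • u) - (0:ℝ) • (B x u)) := by
    have hcont : Continuous fun t : ℝ => B (x + t • u) u - B x u := by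
      have : Continuous fun t : ℝ => B (x + t • u) :=
        hFc.comp (by continuity)
      exact (this.clm_apply continuous_const).sub continuous_const
    have := intervalIntegral.integral_eq_sub_of_hasDerivAt
      (f := fun s : ℝ => F (x + s • u) - s • (B x u))
      (f' := fun t : ℝ => B (x + t • u) u - B x u)
      (fun t _ => hderiv t) (hcont.intervalIntegrable 0 1)
    simpa using this
  have heq : F (x + u) - F x - B x u = ∫ t in (0:ℝ)..1, (B (x + t • u) u - B x u) := by
    rw [hFTC]; simp; abel
  rw [heq]
  have hbound : ∀ t ∈ Set.Icc (0:ℝ) 1, ‖B (x + t • u) u - B x u‖ ≤ L₂ * ‖u‖ ^ 2 * t := by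
    intro t ht
    have : B (x + t • u) u - B x u = (B (x + t • u) - B x) u := by simp
    rw [this]
    calc ‖(B (x + t • u) - B x) u‖ ≤ ‖B (x + t • u) - B x‖ * ‖u‖ :=
          (B (x + t • u) - B x).le_opNorm u
      _ ≤ (L₂ * ‖x + t • u - x‖) * ‖u‖ := by
          gcongr; exact hLip _ _
      _ = L₂ * ‖u‖ ^ 2 * t := by
          have : ‖x + t • u - x‖ = t * ‖u‖ := by
            simp [norm_smul, abs_of_nonneg ht.1]
          rw [this]; ring
  calc ‖∫ t in (0:ℝ)..1, (B (x + t • u) u - B x u)‖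
      ≤ |∫ t in (0:ℝ)..1, L₂ * ‖u‖ ^ 2 * t| := by
        apply intervalIntegral.norm_integral_le_abs_of_norm_le
        · refine (MeasureTheory.ae_restrict_iff' measurableSet_uIoc).mpr
            (Filter.Eventually.of_forall fun t ht => ?_)
          rw [Set.uIoc_of_le (by norm_num : (0:ℝ) ≤ 1)] at ht
          exact hbound t ⟨le_of_lt ht.1, ht.2⟩
        · exact ((continuous_const.mul continuous_id).intervalIntegrable 0 1)
    _ = L₂ / 2 * ‖u‖ ^ 2 := by
        rw [intervalIntegral.integral_const_mul, integral_id]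
        rw [abs_of_nonneg (by positivity)]; ring

/-- Cubic bound on the remainder of the second-order expansion of the function. -/
lemma stmt17_fun_taylor {f : E → ℝ} (hf : ContDiff ℝ 2 f) {L₂ : ℝ} (hL₂ : 0 ≤ L₂)
    (hLip : ∀ a b : E, ‖fderiv ℝ (fderiv ℝ f) a - fderiv ℝ (fderiv ℝ f) b‖ ≤ L₂ * ‖a - b‖)
    (x u : E) :
    |f (x + u) - f x - fderiv ℝ f x u - 1/2 * fderiv ℝ (fderiv ℝ f) x u u|
      ≤ L₂ / 2 * ‖u‖ ^ 3 := by
  set F := fderiv ℝ f with hFdef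
  set B := fderiv ℝ F with hBdef
  have hfd : Differentiable ℝ f := hf.differentiable (by norm_num)
  have hline : ∀ t : ℝ, HasDerivAt (fun s : ℝ => x + s • u) u t := by
    intro t
    simpa using ((hasDerivAt_id t).smul_const u).const_add x
  set ψ : ℝ → ℝ := fun t => f (x + t • u) - t * (F x u) - t ^ 2 / 2 * (B x u u) with hψ
  have hderiv : ∀ t : ℝ, HasDerivAt ψ (F (x + t • u) u - F x u - t * (B x u u)) t := by
    intro t
    have h1 : HasDerivAt (fun s : ℝ => f (x + s • u)) (F (x + t • u) u) t := by
      have := (hfd (x + t • u)).hasFDerivAt.comp_hasDerivAt t (hline t)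
      exact this
    have h2 : HasDerivAt (fun s : ℝ => s * (F x u)) (F x u) t := by
      simpa using (hasDerivAt_id t).mul_const (F x u)
    have h3 : HasDerivAt (fun s : ℝ => s ^ 2 / 2 * (B x u u)) (t * (B x u u)) t := by
      have h := ((hasDerivAt_pow 2 t).div_const 2).mul_const (B x u u)
      exact h.congr_deriv (by norm_num)
    exact (h1.sub h2).sub h3
  have hbound : ∀ t ∈ Set.Ico (0:ℝ) 1, ‖F (x + t • u) u - F x u - t * (B x u u)‖
      ≤ L₂ / 2 * ‖u‖ ^ 3 := by
    intro t ht
    have key : F (x + t • u) u - F x u - t * (B x u u)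
        = (F (x + t • u) - F x - B x (t • u)) u := by
      simp [ContinuousLinearMap.map_smul]
    rw [key]
    calc ‖(F (x + t • u) - F x - B x (t • u)) u‖
        ≤ ‖F (x + t • u) - F x - B x (t • u)‖ * ‖u‖ := ContinuousLinearMap.le_opNorm _ u
      _ ≤ (L₂ / 2 * ‖t • u‖ ^ 2) * ‖u‖ := by
          gcongr
          exact stmt17_grad_taylor hf hL₂ hLip x (t • u)
      _ ≤ L₂ / 2 * ‖u‖ ^ 3 := by
          rw [norm_smul]
          have h1 : |t| ≤ 1 := by
            rw [abs_of_nonneg ht.1]; exact le_of_lt ht.2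
          have : (|t| * ‖u‖) ^ 2 ≤ ‖u‖ ^ 2 := by
            apply pow_le_pow_left₀ (by positivity)
            calc |t| * ‖u‖ ≤ 1 * ‖u‖ := by gcongr
              _ = ‖u‖ := one_mul _
          calc L₂ / 2 * (|t| * ‖u‖) ^ 2 * ‖u‖ ≤ L₂ / 2 * ‖u‖ ^ 2 * ‖u‖ := by gcongr
            _ = L₂ / 2 * ‖u‖ ^ 3 := by ring
  have := norm_image_sub_le_of_norm_deriv_le_segment'
    (f := ψ) (f' := fun t => F (x + t • u) u - F x u - t * (B x u u))
    (a := 0) (b := 1)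
    (fun t _ => (hderiv t).hasDerivWithinAt) hbound 1 (by norm_num)
  have hval : ψ 1 - ψ 0 = f (x + u) - f x - F x u - 1/2 * B x u u := by
    simp [hψ]; ring
  rw [hval] at this
  simpa using this

end TaylorAux

section OrthoAux
variable {ι E : Type*} [NormedAddCommGroup E] [InnerProductSpace ℝ E]

lemma stmt17_inner_sum [DecidableEq ι] {h : ι → E} (hon : Orthonormal ℝ h) (c : ι → ℝ)
    (T : Finset ι) (i : ι) :
    ⟪h i, ∑ j ∈ T, c j • h j⟫ = if i ∈ T then c i else 0 := by
  rw [inner_sum]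
  simp_rw [real_inner_smul_right]
  rw [Finset.sum_congr rfl fun j _ => by rw [orthonormal_iff_ite.mp hon i j]]
  simp [mul_ite, Finset.sum_ite_eq]

lemma stmt17_norm_sum_sq {h : ι → E} (hon : Orthonormal ℝ h) (c : ι → ℝ)
    (T : Finset ι) :
    ‖∑ j ∈ T, c j • h j‖ ^ 2 = ∑ j ∈ T, (c j) ^ 2 := by
  rw [← real_inner_self_eq_norm_sq, hon.inner_sum]
  simp [sq]

end OrthoAux

lemma stmt17_arith {Δx L₂ r : ℝ} (hΔpos : 0 < Δx)
    (k1 : 13824 * Δx * L₂^2 * r^6 ≤ 27 * Δx^3)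
    (k2 : Δx^2 ≤ 4 * L₂^2 * r^6) : False := by
  have k3 : Δx * Δx^2 ≤ Δx * (4 * L₂^2 * r^6) := mul_le_mul_of_nonneg_left k2 hΔpos.le
  nlinarith [k1, k3, pow_pos hΔpos 3]

/-- Lemma 'large-eigenspace-Newton-step': after the restricted Newton step
`y = x − (Π_large H Π_large)† ∇f(x)` (with `H = Σ λⱼ hⱼhⱼᵀ` `δ`-close to `∇²f(x)` and
`Π_large` the projection onto eigenvectors with `|λⱼ| > ℓ`, so that
`(Π_large H Π_large)†∇f(x) = Σ_{|λⱼ|>ℓ} λⱼ⁻¹⟪hⱼ, ∇f(x)⟫hⱼ`), if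
`ℓ ≥ max{24Δₓ^{1/3}L₂^{2/3}, 2δ}` then
`‖Π_large ∇f(y)‖ ≤ 2δ√(3Δₓ/ℓ) + 6L₂Δₓ/ℓ` and
`‖Π_small ∇f(y)‖ ≤ ‖Π_small ∇f(x)‖ + 2δ√(3Δₓ/ℓ) + 6L₂Δₓ/ℓ`. -/
theorem stmt17 (d : ℕ) (f : EuclideanSpace ℝ (Fin d) → ℝ) (L₂ δ ℓ Δx : ℝ)
    (hL₂ : 0 < L₂) (hδ : 0 ≤ δ) (hℓpos : 0 < ℓ)
    (hf : ContDiff ℝ 2 f)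
    (hLip : ∀ x y : EuclideanSpace ℝ (Fin d),
      ‖fderiv ℝ (fderiv ℝ f) x - fderiv ℝ (fderiv ℝ f) y‖ ≤ L₂ * ‖x - y‖)
    (x : EuclideanSpace ℝ (Fin d))
    (hbdd : BddBelow (Set.range f))
    (hΔx : Δx = f x - ⨅ z, f z)
    (lam : Fin d → ℝ) (h : Fin d → EuclideanSpace ℝ (Fin d)) (hon : Orthonormal ℝ h)
    (hH : ∀ v w : EuclideanSpace ℝ (Fin d),
      |(∑ j, lam j * ⟪h j, v⟫ * ⟪h j, w⟫) - fderiv ℝ (fderiv ℝ f) x v w|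
        ≤ δ * ‖v‖ * ‖w‖)
    (hℓ : max (24 * Δx ^ ((1:ℝ)/3) * L₂ ^ ((2:ℝ)/3)) (2 * δ) ≤ ℓ)
    (Plarge : EuclideanSpace ℝ (Fin d) → EuclideanSpace ℝ (Fin d))
    (hPlarge : ∀ v, Plarge v
      = ∑ j ∈ Finset.univ.filter (fun j => ℓ < |lam j|), ⟪h j, v⟫ • h j)
    (y : EuclideanSpace ℝ (Fin d))
    (hy : y = x - ∑ j ∈ Finset.univ.filter (fun j => ℓ < |lam j|),
        ((lam j)⁻¹ * ⟪h j, gradient f x⟫) • h j) :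
    ‖Plarge (gradient f y)‖ ≤ 2 * δ * Real.sqrt (3 * Δx / ℓ) + 6 * L₂ * Δx / ℓ ∧
    ‖gradient f y - Plarge (gradient f y)‖
      ≤ ‖gradient f x - Plarge (gradient f x)‖
        + 2 * δ * Real.sqrt (3 * Δx / ℓ) + 6 * L₂ * Δx / ℓ := by
  classical
  set S : Finset (Fin d) := Finset.univ.filter (fun j => ℓ < |lam j|) with hS
  set g : EuclideanSpace ℝ (Fin d) := gradient f x with hg
  set c : Fin d → ℝ := fun j => ⟪h j, g⟫ with hc
  set F := fderiv ℝ f with hF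
  set B := fderiv ℝ (fderiv ℝ f) with hB
  set u : EuclideanSpace ℝ (Fin d) := -∑ j ∈ S, ((lam j)⁻¹ * c j) • h j with hu
  set N : ℝ := ‖u‖ with hN
  set r : ℝ := Real.sqrt (3 * Δx / ℓ) with hr
  set A : ℝ := ∑ j ∈ S, (c j) ^ 2 / |lam j| with hA
  clear_value S g c F B u N r A
  rw [hB] at hLip
  -- basic facts
  have hinf_le : ∀ z, (⨅ z, f z) ≤ f z := fun z => ciInf_le hbdd z
  have hΔ0 : 0 ≤ Δx := by
    rw [hΔx]; linarith [hinf_le x]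
  have hr0 : 0 ≤ r := by rw [hr]; exact Real.sqrt_nonneg _
  have hr2 : r ^ 2 = 3 * Δx / ℓ := by
    rw [hr]; exact Real.sq_sqrt (by positivity)
  have hδℓ : 2 * δ ≤ ℓ := le_trans (le_max_right _ _) hℓ
  have hmemS : ∀ j, j ∈ S ↔ ℓ < |lam j| := by
    intro j; simp [hS]
  have hlam_ne : ∀ j ∈ S, lam j ≠ 0 := by
    intro j hj
    have h1 := (hmemS j).mp hj
    intro h0
    rw [h0] at h1; simp at h1; linarith
  have hyxu : y = x + u := by
    rw [hy, hu]; simp only [hc]; abel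
  have hinner_u : ∀ j, ⟪h j, u⟫ = if j ∈ S then -((lam j)⁻¹ * c j) else 0 := by
    intro j
    rw [hu, inner_neg_right, stmt17_inner_sum hon]
    by_cases hj : j ∈ S <;> simp [hj]
  have hNsq : N ^ 2 = ∑ j ∈ S, (c j) ^ 2 / (lam j) ^ 2 := by
    rw [hN, hu, norm_neg, stmt17_norm_sum_sq hon]
    refine Finset.sum_congr rfl fun j hj => ?_
    rw [mul_pow, inv_pow, inv_mul_eq_div]
  have hN0 : 0 ≤ N := by rw [hN]; exact norm_nonneg _
  have hA_ge : ℓ * N ^ 2 ≤ A := by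
    rw [hNsq, Finset.mul_sum, hA]
    refine Finset.sum_le_sum fun j hj => ?_
    have hlj : ℓ < |lam j| := (hmemS j).mp hj
    have habs : (0:ℝ) < |lam j| := lt_trans hℓpos hlj
    have hne : lam j ≠ 0 := hlam_ne j hj
    have hl2 : (0:ℝ) < lam j ^ 2 := by positivity
    rw [← mul_div_assoc, div_le_div_iff₀ hl2 habs]
    nlinarith [sq_abs (lam j), sq_nonneg (c j),
      mul_nonneg (mul_nonneg (sub_nonneg.mpr hlj.le) (sq_nonneg (c j))) habs.le]
  have hA0 : 0 ≤ A := by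
    rw [hA]
    exact Finset.sum_nonneg fun j hj => by positivity
  -- the cube inequality from hℓ
  have hℓ3 : 13824 * Δx * L₂ ^ 2 ≤ ℓ ^ 3 := by
    have h24 : 24 * Δx ^ ((1:ℝ)/3) * L₂ ^ ((2:ℝ)/3) ≤ ℓ := le_trans (le_max_left _ _) hℓ
    have hcube := pow_le_pow_left₀ (by positivity) h24 3
    have e1 : (Δx ^ ((1:ℝ)/3)) ^ (3:ℕ) = Δx := by
      rw [← Real.rpow_natCast (Δx ^ ((1:ℝ)/3)) 3, ← Real.rpow_mul hΔ0]
      norm_num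
    have e2 : (L₂ ^ ((2:ℝ)/3)) ^ (3:ℕ) = L₂ ^ 2 := by
      rw [← Real.rpow_natCast (L₂ ^ ((2:ℝ)/3)) 3, ← Real.rpow_mul (le_of_lt hL₂)]
      rw [show ((2:ℝ)/3) * ((3:ℕ):ℝ) = ((2:ℕ):ℝ) by push_cast; ring]
      rw [Real.rpow_natCast]
    calc 13824 * Δx * L₂ ^ 2
        = 24 ^ 3 * ((Δx ^ ((1:ℝ)/3)) ^ (3:ℕ)) * ((L₂ ^ ((2:ℝ)/3)) ^ (3:ℕ)) := by
          rw [e1, e2]; norm_num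
      _ = (24 * Δx ^ ((1:ℝ)/3) * L₂ ^ ((2:ℝ)/3)) ^ 3 := by ring
      _ ≤ ℓ ^ 3 := hcube
  -- gradient applied
  have hgrad_def : ∀ z : EuclideanSpace ℝ (Fin d),
      gradient f z = (InnerProductSpace.toDual ℝ (EuclideanSpace ℝ (Fin d))).symm
        (fderiv ℝ f z) := fun z => rfl
  have hgrad_apply : ∀ (z v : EuclideanSpace ℝ (Fin d)), ⟪gradient f z, v⟫ = fderiv ℝ f z v := by
    intro z v
    rw [hgrad_def]
    exact InnerProductSpace.toDual_symm_apply
  -- MAIN STEP-SIZE BOUND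
  have hNr : N ≤ 2 * r := by
    rcases eq_or_lt_of_le hΔ0 with hΔeq | hΔpos
    · -- Δx = 0 : x is a global minimizer, so the gradient vanishes and u = 0
      have hmin : IsLocalMin f x := by
        refine Filter.Eventually.of_forall fun z => ?_
        have h1 := hinf_le z
        have h2 : f x = ⨅ z, f z := by rw [hΔx] at hΔeq; linarith
        linarith
      have hfd0 : fderiv ℝ f x = 0 := hmin.fderiv_eq_zero
      have hg0 : g = 0 := by
        rw [hg, hgrad_def, hfd0]
        exact map_zero _
      have hu0 : u = 0 := by
        rw [hu]
        have hz : ∀ j ∈ S, ((lam j)⁻¹ * c j) • h j = 0 := by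
          intro j hj
          simp [hc, hg0]
        rw [Finset.sum_congr rfl hz]
        simp
      rw [hN, hu0, norm_zero]
      linarith [hr0]
    · -- Δx > 0
      by_contra hcon
      push_neg at hcon
      have hrpos : 0 < r := by
        rw [hr]
        apply Real.sqrt_pos.mpr
        positivity
      have hNpos : 0 < N := lt_trans (by positivity) hcon
      set t : ℝ := 2 * r / N with ht
      clear_value t
      have ht0 : 0 < t := by
        rw [ht]
        exact div_pos (by linarith) hNpos
      have ht1 : t < 1 := by
        rw [ht, div_lt_one hNpos]; exact hcon
      have htN : t * N = 2 * r := by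
        rw [ht]; field_simp
      set u' : EuclideanSpace ℝ (Fin d) := -∑ j ∈ S, (c j / |lam j|) • h j with hu'
      clear_value u'
      have hinner_u' : ∀ j, ⟪h j, u'⟫ = if j ∈ S then -(c j / |lam j|) else 0 := by
        intro j
        rw [hu', inner_neg_right, stmt17_inner_sum hon]
        by_cases hj : j ∈ S <;> simp [hj]
      have hu'N : ‖u'‖ = N := by
        have h1 : ‖u'‖ ^ 2 = N ^ 2 := by
          rw [hu', norm_neg, stmt17_norm_sum_sq hon, hNsq]
          refine Finset.sum_congr rfl fun j hj => ?_
          rw [div_pow, sq_abs]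
        have h2 := congrArg Real.sqrt h1
        rwa [Real.sqrt_sq (norm_nonneg _), Real.sqrt_sq hN0] at h2
      have hFxu' : F x u' = -A := by
        rw [hF, ← hgrad_apply, ← hg]
        rw [hu', inner_neg_right, inner_sum]
        simp_rw [real_inner_smul_right]
        rw [hA, neg_inj]
        refine Finset.sum_congr rfl fun j hj => ?_
        have hgc : ⟪g, h j⟫ = c j := by rw [hc, real_inner_comm]
        rw [hgc, div_mul_eq_mul_div, ← pow_two]
      -- quadratic form bound
      have hsum_u'u' : (∑ j, lam j * ⟪h j, u'⟫ * ⟪h j, u'⟫) ≤ A := by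
        have hterm : ∀ j, lam j * ⟪h j, u'⟫ * ⟪h j, u'⟫
            = if j ∈ S then lam j * (c j / |lam j|) ^ 2 else 0 := by
          intro j
          by_cases hj : j ∈ S
          · rw [hinner_u' j, if_pos hj, if_pos hj]; ring
          · rw [hinner_u' j, if_neg hj, if_neg hj]; ring
        rw [Finset.sum_congr rfl fun j _ => hterm j, Finset.sum_ite_mem, Finset.univ_inter, hA]
        refine Finset.sum_le_sum fun j hj => ?_
        have hlj : ℓ < |lam j| := (hmemS j).mp hj
        have habs : (0:ℝ) < |lam j| := lt_trans hℓpos hlj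
        have hne : lam j ≠ 0 := hlam_ne j hj
        have heq : lam j * (c j / |lam j|) ^ 2 = (c j) ^ 2 / lam j := by
          rw [div_pow, sq_abs]
          field_simp
        rw [heq]
        calc (c j) ^ 2 / lam j ≤ |(c j) ^ 2 / lam j| := le_abs_self _
          _ = (c j) ^ 2 / |lam j| := by rw [abs_div, abs_of_nonneg (by positivity)]
      have hBu'u' : B x u' u' ≤ A + δ * N ^ 2 := by
        have hq := hH u' u'
        rw [hu'N, show δ * N * N = δ * N ^ 2 from by ring] at hq
        have h1 := abs_le.mp hq
        linarith [h1.1, hsum_u'u']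
      -- Taylor at v = t • u'
      set v : EuclideanSpace ℝ (Fin d) := t • u' with hv
      clear_value v
      have hvnorm : ‖v‖ = 2 * r := by
        rw [hv, norm_smul, hu'N, Real.norm_eq_abs, abs_of_pos ht0, htN]
      have htay := stmt17_fun_taylor hf (le_of_lt hL₂) hLip x v
      rw [← hB, ← hF] at htay
      have hFxv : F x v = -(t * A) := by
        rw [hv, map_smul, hFxu', smul_eq_mul]; ring
      have hBxvv : B x v v ≤ t ^ 2 * (A + δ * N ^ 2) := by
        have hexp : B x v v = t ^ 2 * (B x u' u') := by
          simp only [hv, map_smul, ContinuousLinearMap.smul_apply, smul_eq_mul]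
          ring
        rw [hexp]
        have ht2 : (0:ℝ) ≤ t ^ 2 := by positivity
        exact mul_le_mul_of_nonneg_left hBu'u' ht2
      have hlow : -Δx ≤ f (x + v) - f x := by
        have h1 := hinf_le (x + v)
        rw [hΔx]; linarith
      have hup : f (x + v) - f x ≤ F x v + 1/2 * B x v v + L₂ / 2 * ‖v‖ ^ 3 := by
        have h1 := abs_le.mp htay
        linarith [h1.2]
      -- combine
      have hts : t ^ 2 * A ≤ t * A := by
        nlinarith [mul_nonneg (mul_nonneg ht0.le (sub_nonneg.mpr ht1.le)) hA0]
      have key : -Δx ≤ -(t*A) + 1/2 * (t^2 * (A + δ * N^2)) + L₂/2 * (2*r)^3 := by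
        rw [← hvnorm]
        have hB2 : 1/2 * B x v v ≤ 1/2 * (t^2 * (A + δ * N^2)) := by linarith [hBxvv]
        calc -Δx ≤ f (x + v) - f x := hlow
          _ ≤ F x v + 1/2 * B x v v + L₂ / 2 * ‖v‖ ^ 3 := hup
          _ ≤ -(t*A) + 1/2 * (t^2 * (A + δ * N^2)) + L₂/2 * ‖v‖^3 := by
              rw [hFxv]; linarith
      -- now pure arithmetic contradiction
      have htA : -(t * A) + 1/2 * (t^2 * A) ≤ -(1/2) * (t * (ℓ * N^2)) := by
        have h2 : t * (ℓ * N ^ 2) ≤ t * A :=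
          mul_le_mul_of_nonneg_left hA_ge (le_of_lt ht0)
        linarith [hts]
      have hstep1 : -(1/2) * (t * (ℓ * N^2)) ≤ -(ℓ * 2 * r^2) := by
        have h2 : 2 * r ≤ N := le_of_lt hcon
        have h3 : t * (ℓ * N^2) = ℓ * ((t*N) * N) := by ring
        rw [h3, htN]
        have h5 : ℓ * ((2*r) * (2*r)) ≤ ℓ * ((2*r) * N) := by
          apply mul_le_mul_of_nonneg_left _ hℓpos.le
          exact mul_le_mul_of_nonneg_left h2 (by linarith)
        linarith [h5]
      have hstep2 : 1/2 * (t^2 * (δ * N^2)) ≤ ℓ * r^2 := by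
        have h3 : t^2 * (δ * N^2) = δ * (t*N)^2 := by ring
        rw [h3, htN]
        linarith [mul_nonneg (sub_nonneg.mpr hδℓ) (sq_nonneg r)]
      have hfin : -Δx ≤ -(ℓ * r^2) + 4 * L₂ * r^3 := by
        have expand : 1/2 * (t^2 * (A + δ * N^2)) = 1/2*(t^2*A) + 1/2*(t^2*(δ*N^2)) := by ring
        have hcube : L₂/2 * (2*r)^3 = 4*L₂*r^3 := by ring
        linarith [key, htA, hstep1, hstep2]
      have hlr2 : ℓ * r^2 = 3 * Δx := by
        rw [hr2]; field_simp
      have hc1 : Δx ≤ 2 * L₂ * r^3 := by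
        rw [hlr2] at hfin; linarith
      -- contradiction
      have hc5 : ℓ^3 * r^6 = 27 * Δx^3 := by
        calc ℓ^3 * r^6 = (ℓ * r^2)^3 := by ring
          _ = (3*Δx)^3 := by rw [hlr2]
          _ = 27 * Δx^3 := by ring
      have hr6 : (0:ℝ) ≤ r^6 := by positivity
      have k1 : 13824 * Δx * L₂^2 * r^6 ≤ 27 * Δx^3 := by
        rw [← hc5]
        exact mul_le_mul_of_nonneg_right hℓ3 hr6
      have k2 : Δx^2 ≤ 4 * L₂^2 * r^6 := by
        have h6 := mul_self_le_mul_self hΔ0 hc1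
        calc Δx^2 = Δx * Δx := by ring
          _ ≤ (2 * L₂ * r^3) * (2 * L₂ * r^3) := h6
          _ = 4 * L₂^2 * r^6 := by ring
      exact stmt17_arith hΔpos k1 k2
  -- FINAL SECTION
  set w : EuclideanSpace ℝ (Fin d) := -∑ j ∈ S, (c j) • h j with hw
  set g' : EuclideanSpace ℝ (Fin d) := gradient f y with hg'
  clear_value w g'
  have hsum_uv : ∀ vv : EuclideanSpace ℝ (Fin d),
      (∑ j, lam j * ⟪h j, u⟫ * ⟪h j, vv⟫) = ⟪w, vv⟫ := by
    intro vv
    have hterm : ∀ j, lam j * ⟪h j, u⟫ * ⟪h j, vv⟫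
        = if j ∈ S then -(c j * ⟪h j, vv⟫) else 0 := by
      intro j
      by_cases hj : j ∈ S
      · rw [hinner_u j, if_pos hj, if_pos hj]
        have hne := hlam_ne j hj
        field_simp
      · rw [hinner_u j, if_neg hj, if_neg hj]
        ring
    rw [Finset.sum_congr rfl fun j _ => hterm j, Finset.sum_ite_mem, Finset.univ_inter]
    rw [hw, inner_neg_left, sum_inner, ← Finset.sum_neg_distrib]
    refine Finset.sum_congr rfl fun j hj => ?_
    rw [real_inner_smul_left]
  set D : EuclideanSpace ℝ (Fin d) :=
    (InnerProductSpace.toDual ℝ (EuclideanSpace ℝ (Fin d))).symm (B x u) with hD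
  clear_value D
  have hDv : ∀ vv : EuclideanSpace ℝ (Fin d), ⟪D, vv⟫ = B x u vv := by
    intro vv; rw [hD]; exact InnerProductSpace.toDual_symm_apply
  have hDw : ‖D - w‖ ≤ δ * N := by
    rcases eq_or_ne (D - w) 0 with h0 | h0
    · rw [h0, norm_zero]; exact mul_nonneg hδ hN0
    · have hpos : 0 < ‖D - w‖ := norm_pos_iff.mpr h0
      have hHu := hH u (D - w)
      rw [hsum_uv (D - w), ← hN] at hHu
      have h1 := (abs_le.mp hHu).1
      have h2 : ⟪D - w, D - w⟫ = B x u (D - w) - ⟪w, D - w⟫ := by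
        rw [inner_sub_left, hDv]
      have h3 : ‖D - w‖ ^ 2 ≤ δ * N * ‖D - w‖ := by
        rw [← real_inner_self_eq_norm_sq, h2]
        linarith
      rw [pow_two] at h3
      exact le_of_mul_le_mul_right h3 hpos
  have hgD : ‖g' - g - D‖ ≤ L₂ / 2 * N ^ 2 := by
    have heq : g' - g - D = (InnerProductSpace.toDual ℝ (EuclideanSpace ℝ (Fin d))).symm
        (fderiv ℝ f y - fderiv ℝ f x - B x u) := by
      rw [hg', hg, hD, hgrad_def y, hgrad_def x, ← map_sub, ← map_sub]
    rw [heq, LinearIsometryEquiv.norm_map]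
    have htg := stmt17_grad_taylor hf (le_of_lt hL₂) hLip x u
    rw [← hB, ← hyxu] at htg
    rw [hN]
    exact htg
  set e : EuclideanSpace ℝ (Fin d) := g' - g - w with he_def
  clear_value e
  have he : ‖e‖ ≤ L₂ / 2 * N ^ 2 + δ * N := by
    have hsplit : e = (g' - g - D) + (D - w) := by rw [he_def]; abel
    rw [hsplit]
    calc ‖(g' - g - D) + (D - w)‖ ≤ ‖g' - g - D‖ + ‖D - w‖ := norm_add_le _ _
      _ ≤ L₂ / 2 * N ^ 2 + δ * N := add_le_add hgD hDw
  have he2 : ‖e‖ ≤ 2 * δ * r + 6 * L₂ * Δx / ℓ := by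
    have hN2 : N ^ 2 ≤ (2*r) ^ 2 := by
      rw [pow_two, pow_two]
      exact mul_self_le_mul_self hN0 hNr
    have b1 : L₂ / 2 * N ^ 2 ≤ 6 * L₂ * Δx / ℓ := by
      calc L₂ / 2 * N ^ 2 ≤ L₂ / 2 * (2*r)^2 :=
            mul_le_mul_of_nonneg_left hN2 (by positivity)
        _ = 2 * L₂ * r^2 := by ring
        _ = 6 * L₂ * Δx / ℓ := by rw [hr2]; ring
    have b2 : δ * N ≤ 2 * δ * r := by
      have := mul_le_mul_of_nonneg_left hNr hδ
      linarith
    linarith [he]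
  -- projection facts
  have hPadd : ∀ a b : EuclideanSpace ℝ (Fin d), Plarge (a + b) = Plarge a + Plarge b := by
    intro a b
    simp [hPlarge, inner_add_right, add_smul, Finset.sum_add_distrib]
  have hPw : Plarge w = w := by
    rw [hPlarge]
    have hterm : ∀ j ∈ S, ⟪h j, w⟫ • h j = (-(c j)) • h j := by
      intro j hj
      rw [hw, inner_neg_right, stmt17_inner_sum hon, if_pos hj]
    rw [Finset.sum_congr rfl hterm, hw, ← Finset.sum_neg_distrib]
    refine Finset.sum_congr rfl fun j hj => ?_
    rw [neg_smul]
  have hPg : Plarge g = -w := by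
    rw [hPlarge, hw, neg_neg]
    simp only [hc]
  have hPg' : Plarge g' = Plarge e := by
    have hgeq : g' = g + (w + e) := by rw [he_def]; abel
    rw [hgeq, hPadd, hPadd, hPg, hPw]
    abel
  have hcontract : ∀ vv : EuclideanSpace ℝ (Fin d),
      ‖Plarge vv‖ ≤ ‖vv‖ ∧ ‖vv - Plarge vv‖ ≤ ‖vv‖ := by
    intro vv
    have h1 : ‖Plarge vv‖ ^ 2 = ∑ j ∈ S, ⟪h j, vv⟫ ^ 2 := by
      rw [hPlarge, stmt17_norm_sum_sq hon]
    have h2 : ⟪Plarge vv, vv⟫ = ∑ j ∈ S, ⟪h j, vv⟫ ^ 2 := by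
      rw [hPlarge, sum_inner]
      refine Finset.sum_congr rfl fun j hj => ?_
      rw [real_inner_smul_left, sq]
    have h2' : ⟪vv, Plarge vv⟫ = ∑ j ∈ S, ⟪h j, vv⟫ ^ 2 := by
      rw [real_inner_comm]; exact h2
    have h3 : ‖vv - Plarge vv‖ ^ 2 = ‖vv‖ ^ 2 - ‖Plarge vv‖ ^ 2 := by
      rw [norm_sub_sq_real, h2', ← h1]
      ring
    constructor
    · have h4 : ‖Plarge vv‖ ^ 2 ≤ ‖vv‖ ^ 2 := by
        linarith [h3, sq_nonneg ‖vv - Plarge vv‖]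
      calc ‖Plarge vv‖ = Real.sqrt (‖Plarge vv‖ ^ 2) := (Real.sqrt_sq (norm_nonneg _)).symm
        _ ≤ Real.sqrt (‖vv‖ ^ 2) := Real.sqrt_le_sqrt h4
        _ = ‖vv‖ := Real.sqrt_sq (norm_nonneg _)
    · have h4 : ‖vv - Plarge vv‖ ^ 2 ≤ ‖vv‖ ^ 2 := by
        linarith [h3, sq_nonneg ‖Plarge vv‖]
      calc ‖vv - Plarge vv‖ = Real.sqrt (‖vv - Plarge vv‖ ^ 2) :=
            (Real.sqrt_sq (norm_nonneg _)).symm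
        _ ≤ Real.sqrt (‖vv‖ ^ 2) := Real.sqrt_le_sqrt h4
        _ = ‖vv‖ := Real.sqrt_sq (norm_nonneg _)
  constructor
  · rw [hPg']
    calc ‖Plarge e‖ ≤ ‖e‖ := (hcontract e).1
      _ ≤ 2 * δ * r + 6 * L₂ * Δx / ℓ := he2
  · have hgeq : g' = g + w + e := by rw [he_def]; abel
    have hPgeq : Plarge g' = Plarge g + w + Plarge e := by
      rw [hgeq, hPadd, hPadd, hPw]
    have hdecomp : g' - Plarge g' = (g - Plarge g) + (e - Plarge e) := by
      rw [hPgeq, hgeq]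
      abel
    rw [hdecomp]
    calc ‖(g - Plarge g) + (e - Plarge e)‖ ≤ ‖g - Plarge g‖ + ‖e - Plarge e‖ := norm_add_le _ _
      _ ≤ ‖g - Plarge g‖ + ‖e‖ := by linarith [(hcontract e).2]
      _ ≤ ‖g - Plarge g‖ + (2 * δ * r + 6 * L₂ * Δx / ℓ) := by linarith [he2]
      _ = ‖g - Plarge g‖ + 2 * δ * r + 6 * L₂ * Δx / ℓ := by ring
end
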